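/- arXiv:0909.2283 — 7 statements merged into one kernel-verified Lean document; each statement's English description precedes it below -/
import Mathlib

section
/- The space 𝕄 of monotone graphs, equipped with the Hausdorff distance ρ, is a complete and separable (Polish) metric space. -/
/-- A monotone graph: the filled-in graph (in `ℝ₊²`) of a nonnegative nondecreasing function,
viewed as a compact connected subset of the plane containing `(0,0)` which is monotone:
`x < x'` implies `y ≤ y'` for points `(x,y), (x',y')` of the set. -/
def IsMonotoneGraph (Γ : Set (ℝ × ℝ)) : Prop :=
  IsCompact Γ ∧ IsConnected Γ ∧ (0, 0) ∈ Γ ∧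
  (∀ p ∈ Γ, 0 ≤ p.1 ∧ 0 ≤ p.2) ∧
  (∀ p ∈ Γ, ∀ q ∈ Γ, p.1 < q.1 → p.2 ≤ q.2)

open Metric EMetric Set TopologicalSpace

/-- A compact set approximated in Hausdorff distance by connected compacts is connected. -/
lemma connected_of_approx {X : Type*} [MetricSpace X] {K : Set X} (hK : IsCompact K)
    (hne : K.Nonempty)
    (h : ∀ ε > (0 : ℝ), ∃ K' : Set X, IsConnected K' ∧ hausdorffDist K K' < ε ∧
      hausdorffEdist K K' ≠ ⊤) :
    IsConnected K := by
  refine ⟨hne, ?_⟩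
  by_contra hcon
  rw [IsPreconnected] at hcon
  push_neg at hcon
  obtain ⟨u, v, hu, hv, hKuv, hKu, hKv, hKuve⟩ := hcon
  set A := K \ v with hAdef
  set B := K \ u with hBdef
  have hA : IsCompact A := hK.diff hv
  have hB : IsCompact B := hK.diff hu
  have hAB : A ∪ B = K := by
    apply Set.Subset.antisymm (Set.union_subset diff_subset diff_subset)
    intro x hx
    by_cases hxv : x ∈ v
    · right
      refine ⟨hx, fun hxu => ?_⟩
      have : x ∈ K ∩ (u ∩ v) := ⟨hx, hxu, hxv⟩
      simp [hKuve] at this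
    · exact Or.inl ⟨hx, hxv⟩
  have hdisj : Disjoint A B := by
    rw [Set.disjoint_left]
    rintro x ⟨hxK, hxv⟩ ⟨_, hxu⟩
    rcases hKuv hxK with h' | h'
    · exact hxu h'
    · exact hxv h'
  obtain ⟨δ, hδ, hthick⟩ := hdisj.exists_thickenings hA hB.isClosed
  obtain ⟨K', hK'conn, hdist, hfin⟩ := h δ hδ
  have hAne : A.Nonempty := by
    obtain ⟨x, hxK, hxu⟩ := hKu
    refine ⟨x, hxK, fun hxv => ?_⟩
    have : x ∈ K ∩ (u ∩ v) := ⟨hxK, hxu, hxv⟩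
    simp [hKuve] at this
  have hBne : B.Nonempty := by
    obtain ⟨x, hxK, hxv⟩ := hKv
    refine ⟨x, hxK, fun hxu => ?_⟩
    have : x ∈ K ∩ (u ∩ v) := ⟨hxK, hxu, hxv⟩
    simp [hKuve] at this
  have hsub : K' ⊆ thickening δ A ∪ thickening δ B := by
    intro y hy
    obtain ⟨x, hxK, hd⟩ := exists_dist_lt_of_hausdorffDist_lt' hy hdist hfin
    rw [← hAB] at hxK
    rcases hxK with hx | hx
    · exact Or.inl (mem_thickening_iff.2 ⟨x, hx, by rwa [dist_comm]⟩)
    · exact Or.inr (mem_thickening_iff.2 ⟨x, hx, by rwa [dist_comm]⟩)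
  have hmeetA : (K' ∩ thickening δ A).Nonempty := by
    obtain ⟨a, ha⟩ := hAne
    obtain ⟨y, hy, hd⟩ := exists_dist_lt_of_hausdorffDist_lt (hAB ▸ Set.mem_union_left _ ha)
      hdist hfin
    exact ⟨y, hy, mem_thickening_iff.2 ⟨a, ha, by rwa [dist_comm]⟩⟩
  have hmeetB : (K' ∩ thickening δ B).Nonempty := by
    obtain ⟨b, hb⟩ := hBne
    obtain ⟨y, hy, hd⟩ := exists_dist_lt_of_hausdorffDist_lt (hAB ▸ Set.mem_union_right _ hb)
      hdist hfin
    exact ⟨y, hy, mem_thickening_iff.2 ⟨b, hb, by rwa [dist_comm]⟩⟩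
  obtain ⟨y, _, hyA, hyB⟩ := hK'conn.isPreconnected _ _ isOpen_thickening isOpen_thickening
    hsub hmeetA hmeetB
  exact (Set.disjoint_left.1 hthick) hyA hyB

lemma hEdist_ne_top (s t : NonemptyCompacts (ℝ × ℝ)) :
    hausdorffEdist (s : Set (ℝ × ℝ)) (t : Set (ℝ × ℝ)) ≠ ⊤ :=
  hausdorffEdist_ne_top_of_nonempty_of_bounded s.nonempty t.nonempty s.isCompact.isBounded
    t.isCompact.isBounded

lemma coord_lt {p q : ℝ × ℝ} {ε : ℝ} (h : dist p q < ε) :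
    |p.1 - q.1| < ε ∧ |p.2 - q.2| < ε := by
  rw [Prod.dist_eq, max_lt_iff, Real.dist_eq, Real.dist_eq] at h
  exact h

lemma isClosed_S :
    IsClosed {K : NonemptyCompacts (ℝ × ℝ) | IsMonotoneGraph (K : Set (ℝ × ℝ))} := by
  refine isClosed_of_closure_subset ?_
  intro K hK
  rw [Metric.mem_closure_iff] at hK
  have approx : ∀ ε > (0 : ℝ), ∃ K' : NonemptyCompacts (ℝ × ℝ),
      IsMonotoneGraph (K' : Set (ℝ × ℝ)) ∧
      hausdorffDist (K : Set (ℝ × ℝ)) (K' : Set (ℝ × ℝ)) < ε := by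
    intro ε hε
    obtain ⟨K', hK', hd⟩ := hK ε hε
    exact ⟨K', hK', by rwa [NonemptyCompacts.dist_eq] at hd⟩
  refine ⟨K.isCompact, ?_, ?_, ?_, ?_⟩
  · refine connected_of_approx K.isCompact K.nonempty fun ε hε => ?_
    obtain ⟨K', hK', hd⟩ := approx ε hε
    exact ⟨K', hK'.2.1, hd, hEdist_ne_top K K'⟩
  · -- (0,0) ∈ K
    have : (0, 0) ∈ closure (K : Set (ℝ × ℝ)) := by
      rw [Metric.mem_closure_iff]
      intro ε hε
      obtain ⟨K', hK', hd⟩ := approx ε hε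
      obtain ⟨x, hx, hdx⟩ := exists_dist_lt_of_hausdorffDist_lt' hK'.2.2.1 hd (hEdist_ne_top K K')
      exact ⟨x, hx, by rwa [dist_comm]⟩
    rwa [K.isCompact.isClosed.closure_eq] at this
  · -- nonneg coordinates
    intro p hp
    constructor
    · by_contra hneg
      push_neg at hneg
      obtain ⟨K', hK', hd⟩ := approx (-p.1) (by linarith)
      obtain ⟨q, hq, hdq⟩ := exists_dist_lt_of_hausdorffDist_lt hp hd (hEdist_ne_top K K')
      have h1 := (coord_lt hdq).1
      have h2 := (hK'.2.2.2.1 q hq).1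
      rw [abs_lt] at h1
      linarith
    · by_contra hneg
      push_neg at hneg
      obtain ⟨K', hK', hd⟩ := approx (-p.2) (by linarith)
      obtain ⟨q, hq, hdq⟩ := exists_dist_lt_of_hausdorffDist_lt hp hd (hEdist_ne_top K K')
      have h1 := (coord_lt hdq).2
      have h2 := (hK'.2.2.2.1 q hq).2
      rw [abs_lt] at h1
      linarith
  · -- monotone
    intro p hp q hq hpq
    by_contra hle
    push_neg at hle
    set ε := min ((q.1 - p.1) / 2) ((p.2 - q.2) / 2) with hεdef
    have hε : 0 < ε := lt_min (by linarith) (by linarith)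
    obtain ⟨K', hK', hd⟩ := approx ε hε
    obtain ⟨p', hp', hdp⟩ := exists_dist_lt_of_hausdorffDist_lt hp hd (hEdist_ne_top K K')
    obtain ⟨q', hq', hdq⟩ := exists_dist_lt_of_hausdorffDist_lt hq hd (hEdist_ne_top K K')
    have hp1 := (coord_lt hdp).1
    have hp2 := (coord_lt hdp).2
    have hq1 := (coord_lt hdq).1
    have hq2 := (coord_lt hdq).2
    rw [abs_lt] at hp1 hp2 hq1 hq2
    have hε1 : ε ≤ (q.1 - p.1) / 2 := min_le_left _ _
    have hε2 : ε ≤ (p.2 - q.2) / 2 := min_le_right _ _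
    have h1 : p'.1 < q'.1 := by linarith
    have h2 := hK'.2.2.2.2 p' hp' q' hq' h1
    linarith

/-- Map a monotone graph to a nonempty compact. -/
def toNC (Γ : {Γ : Set (ℝ × ℝ) // IsMonotoneGraph Γ}) : NonemptyCompacts (ℝ × ℝ) :=
  ⟨⟨Γ.1, Γ.2.1⟩, ⟨(0, 0), Γ.2.2.2.1⟩⟩

lemma toNC_injective : Function.Injective toNC := by
  intro a b h
  exact Subtype.ext (congrArg (fun K : NonemptyCompacts (ℝ × ℝ) => (K : Set (ℝ × ℝ))) h)

lemma range_toNC :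
    Set.range toNC = {K : NonemptyCompacts (ℝ × ℝ) | IsMonotoneGraph (K : Set (ℝ × ℝ))} := by
  ext K
  constructor
  · rintro ⟨Γ, rfl⟩
    exact Γ.2
  · intro hK
    exact ⟨⟨(K : Set (ℝ × ℝ)), hK⟩, TopologicalSpace.NonemptyCompacts.ext rfl⟩

/-- the space `𝕄` of monotone graphs, with the Hausdorff distance,
is a complete separable (Polish) metric space. -/
theorem stmt_2 :
    ∃ m : MetricSpace {Γ : Set (ℝ × ℝ) // IsMonotoneGraph Γ},
      (∀ Γ₁ Γ₂ : {Γ : Set (ℝ × ℝ) // IsMonotoneGraph Γ},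
        @dist _ m.toDist Γ₁ Γ₂ = Metric.hausdorffDist (Γ₁ : Set (ℝ × ℝ)) (Γ₂ : Set (ℝ × ℝ))) ∧
      @CompleteSpace _ m.toUniformSpace ∧
      @TopologicalSpace.SeparableSpace _ m.toUniformSpace.toTopologicalSpace := by
  letI m : MetricSpace {Γ : Set (ℝ × ℝ) // IsMonotoneGraph Γ} :=
    MetricSpace.induced toNC toNC_injective inferInstance
  have hiso : Isometry toNC := Isometry.of_dist_eq fun x y => rfl
  refine ⟨m, ?_, ?_, ?_⟩
  · intro Γ₁ Γ₂
    show dist (toNC Γ₁) (toNC Γ₂) = _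
    rw [NonemptyCompacts.dist_eq]
    rfl
  · exact (completeSpace_iff_isComplete_range hiso.isUniformEmbedding.isUniformInducing).2
      (by rw [range_toNC]; exact isClosed_S.isComplete)
  · have h2 : @SecondCountableTopology _ m.toUniformSpace.toTopologicalSpace :=
      TopologicalSpace.secondCountableTopology_induced _ _ toNC
    exact @TopologicalSpace.SecondCountableTopology.to_separableSpace _
      m.toUniformSpace.toTopologicalSpace h2
end

section
/- Every element of 𝕄 (a monotone graph in ℝ₊², i.e., the filled-in graph of a nondecreasing function f : [0,z] → ℝ₊), when viewed in the rotated coordinate system (s, g) with s = x + y and g = y − x for (x,y) on the graph, is the graph of a 1-Lipschitz function g : [0, z + f(z)] → ℝ. Conversely, the Hausdorff metric ρ on 𝕄 is equivalent to the metric ρ'(Γ₁, Γ₂) = |s₁ − s₂| + sup_{0 ≤ s ≤ s₁∧s₂} |g₁(s) − g₂(s)|, where g_i is the 1-Lipschitz representation of Γ_i over [0, s_i]. -/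
open Set Filter

/-- Total rotated length `s₁ = z + f(z)` of a monotone graph: the sup of `x + y` over the graph. -/
noncomputable def rotLen (Γ : Set (ℝ × ℝ)) : ℝ := sSup ((fun p : ℝ × ℝ => p.1 + p.2) '' Γ)

/-- The rotated-coordinate representation `g(s) = y − x` where `(x,y)` is the unique point of
`Γ` on the line `x + y = s`. -/
noncomputable def rotFun (Γ : Set (ℝ × ℝ)) (s : ℝ) : ℝ :=
  sSup ((fun p : ℝ × ℝ => p.2 - p.1) '' (Γ ∩ {p | p.1 + p.2 = s}))

/-- The metric `ρ'` built from the rotated 1-Lipschitz representations. -/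
noncomputable def rho' (Γ₁ Γ₂ : Set (ℝ × ℝ)) : ℝ :=
  |rotLen Γ₁ - rotLen Γ₂| +
    sSup ((fun s => |rotFun Γ₁ s - rotFun Γ₂ s|) '' Icc 0 (min (rotLen Γ₁) (rotLen Γ₂)))

namespace MGaux

variable {Γ : Set (ℝ × ℝ)}

lemma contSum : Continuous (fun p : ℝ × ℝ => p.1 + p.2) :=
  continuous_fst.add continuous_snd

lemma sum_le_rotLen (hΓ : IsMonotoneGraph Γ) {p : ℝ × ℝ} (hp : p ∈ Γ) :
    p.1 + p.2 ≤ rotLen Γ := by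
  apply le_csSup ((hΓ.1.image contSum).bddAbove) (mem_image_of_mem _ hp)

lemma rotLen_nonneg (hΓ : IsMonotoneGraph Γ) : 0 ≤ rotLen Γ := by
  have := sum_le_rotLen hΓ hΓ.2.2.1
  simpa using this

lemma unique_point (hΓ : IsMonotoneGraph Γ) {p q : ℝ × ℝ} (hp : p ∈ Γ) (hq : q ∈ Γ)
    (h : p.1 + p.2 = q.1 + q.2) : p = q := by
  rcases lt_trichotomy p.1 q.1 with h1 | h1 | h1
  · have := hΓ.2.2.2.2 p hp q hq h1; exfalso; linarith
  · have : p.2 = q.2 := by linarith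
    exact Prod.ext h1 this
  · have := hΓ.2.2.2.2 q hq p hp h1; exfalso; linarith

lemma exists_point (hΓ : IsMonotoneGraph Γ) {s : ℝ} (hs : s ∈ Icc 0 (rotLen Γ)) :
    ∃ p ∈ Γ, p.1 + p.2 = s := by
  have hK : IsCompact ((fun p : ℝ × ℝ => p.1 + p.2) '' Γ) := hΓ.1.image contSum
  have hne : ((fun p : ℝ × ℝ => p.1 + p.2) '' Γ).Nonempty :=
    ⟨0, ⟨(0, 0), hΓ.2.2.1, by simp⟩⟩
  have hmax : rotLen Γ ∈ (fun p : ℝ × ℝ => p.1 + p.2) '' Γ := hK.sSup_mem hne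
  obtain ⟨pm, hpm, hpmeq⟩ := hmax
  have := hΓ.2.1.isPreconnected.intermediate_value hΓ.2.2.1 hpm contSum.continuousOn
  have hmem : s ∈ Icc ((0:ℝ×ℝ).1 + (0:ℝ×ℝ).2) (pm.1 + pm.2) := by
    simpa [hpmeq] using hs
  obtain ⟨p, hp, hps⟩ := this hmem
  exact ⟨p, hp, hps⟩

lemma rotFun_eq (hΓ : IsMonotoneGraph Γ) {p : ℝ × ℝ} (hp : p ∈ Γ) :
    rotFun Γ (p.1 + p.2) = p.2 - p.1 := by
  have hset : Γ ∩ {q : ℝ × ℝ | q.1 + q.2 = p.1 + p.2} = {p} := by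
    ext q
    constructor
    · rintro ⟨hq, hq2⟩
      exact unique_point hΓ hq hp hq2
    · rintro rfl; exact ⟨hp, rfl⟩
  rw [rotFun, hset, image_singleton, csSup_singleton]

/-- ≤-monotonicity in both coordinates along increasing `s`. -/
lemma mono_aux (hΓ : IsMonotoneGraph Γ) {p q : ℝ × ℝ} (hp : p ∈ Γ) (hq : q ∈ Γ)
    (h : p.1 + p.2 ≤ q.1 + q.2) : p.1 ≤ q.1 ∧ p.2 ≤ q.2 := by
  have h1 : p.1 ≤ q.1 := by
    by_contra hc
    push_neg at hc
    have := hΓ.2.2.2.2 q hq p hp hc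
    linarith
  refine ⟨h1, ?_⟩
  rcases eq_or_lt_of_le h1 with h2 | h2
  · linarith
  · exact hΓ.2.2.2.2 p hp q hq h2

lemma lip (hΓ : IsMonotoneGraph Γ) : LipschitzOnWith 1 (rotFun Γ) (Icc 0 (rotLen Γ)) := by
  rw [lipschitzOnWith_iff_dist_le_mul]
  have key : ∀ s ∈ Icc 0 (rotLen Γ), ∀ t ∈ Icc 0 (rotLen Γ), s ≤ t →
      |rotFun Γ t - rotFun Γ s| ≤ t - s := by
    intro s hs t ht hst
    obtain ⟨p, hp, hps⟩ := exists_point hΓ hs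
    obtain ⟨q, hq, hqt⟩ := exists_point hΓ ht
    have h1 : rotFun Γ s = p.2 - p.1 := by rw [← hps]; exact rotFun_eq hΓ hp
    have h2 : rotFun Γ t = q.2 - q.1 := by rw [← hqt]; exact rotFun_eq hΓ hq
    have := mono_aux hΓ hp hq (by linarith)
    rw [h1, h2, abs_le]
    obtain ⟨hA, hB⟩ := this
    constructor <;> linarith
  intro s hs t ht
  rw [Real.dist_eq, Real.dist_eq, NNReal.coe_one, one_mul]
  rcases le_total s t with h | h
  · have := key s hs t ht h
    rw [abs_sub_comm] at this
    have habs : |t - s| = t - s := abs_of_nonneg (by linarith)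
    rw [abs_sub_comm (s:ℝ) t, habs]; exact this
  · have := key t ht s hs h
    have habs : |s - t| = s - t := abs_of_nonneg (by linarith)
    rw [habs]; exact this

lemma graph_eq (hΓ : IsMonotoneGraph Γ) :
    Γ = (fun s => ((s - rotFun Γ s) / 2, (s + rotFun Γ s) / 2)) '' Icc 0 (rotLen Γ) := by
  ext p
  constructor
  · intro hp
    refine ⟨p.1 + p.2, ⟨?_, sum_le_rotLen hΓ hp⟩, ?_⟩
    · have := hΓ.2.2.2.1 p hp; linarith [this.1, this.2]
    · show ((p.1 + p.2 - rotFun Γ (p.1 + p.2)) / 2, (p.1 + p.2 + rotFun Γ (p.1 + p.2)) / 2) = p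
      rw [rotFun_eq hΓ hp]
      ext <;> simp <;> ring
  · rintro ⟨s, hs, rfl⟩
    obtain ⟨q, hq, hqs⟩ := exists_point hΓ hs
    have h1 : rotFun Γ s = q.2 - q.1 := by rw [← hqs]; exact rotFun_eq hΓ hq
    have : ((s - rotFun Γ s) / 2, (s + rotFun Γ s) / 2) = q := by
      rw [h1]; ext <;> simp <;> linarith
    show ((s - rotFun Γ s) / 2, (s + rotFun Γ s) / 2) ∈ Γ
    rw [this]; exact hq

/-- Each point of Γ is the image of its parameter. -/
lemma point_eq (hΓ : IsMonotoneGraph Γ) {p : ℝ × ℝ} (hp : p ∈ Γ) :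
    p = ((p.1 + p.2 - rotFun Γ (p.1 + p.2)) / 2, (p.1 + p.2 + rotFun Γ (p.1 + p.2)) / 2) := by
  rw [rotFun_eq hΓ hp]; ext <;> simp <;> ring

lemma sum_mem (hΓ : IsMonotoneGraph Γ) {p : ℝ × ℝ} (hp : p ∈ Γ) :
    p.1 + p.2 ∈ Icc 0 (rotLen Γ) := by
  have := hΓ.2.2.2.1 p hp
  exact ⟨by linarith [this.1, this.2], sum_le_rotLen hΓ hp⟩

section two
variable {Γ₁ Γ₂ : Set (ℝ × ℝ)}

lemma sup_bddAbove (h₁ : IsMonotoneGraph Γ₁) (h₂ : IsMonotoneGraph Γ₂) :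
    BddAbove ((fun s => |rotFun Γ₁ s - rotFun Γ₂ s|) '' Icc 0 (min (rotLen Γ₁) (rotLen Γ₂))) := by
  apply IsCompact.bddAbove_image isCompact_Icc
  have hc1 : ContinuousOn (rotFun Γ₁) (Icc 0 (min (rotLen Γ₁) (rotLen Γ₂))) :=
    ((lip h₁).continuousOn).mono (Icc_subset_Icc le_rfl (min_le_left _ _))
  have hc2 : ContinuousOn (rotFun Γ₂) (Icc 0 (min (rotLen Γ₁) (rotLen Γ₂))) :=
    ((lip h₂).continuousOn).mono (Icc_subset_Icc le_rfl (min_le_right _ _))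
  exact (hc1.sub hc2).abs

lemma sup_nonneg' (h₁ : IsMonotoneGraph Γ₁) (h₂ : IsMonotoneGraph Γ₂) :
    0 ≤ sSup ((fun s => |rotFun Γ₁ s - rotFun Γ₂ s|) '' Icc 0 (min (rotLen Γ₁) (rotLen Γ₂))) := by
  have h0 : (0:ℝ) ∈ Icc 0 (min (rotLen Γ₁) (rotLen Γ₂)) :=
    ⟨le_rfl, le_min (rotLen_nonneg h₁) (rotLen_nonneg h₂)⟩
  calc (0:ℝ) ≤ |rotFun Γ₁ 0 - rotFun Γ₂ 0| := abs_nonneg _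
    _ ≤ _ := le_csSup (sup_bddAbove h₁ h₂) (mem_image_of_mem _ h0)

lemma rho'_nonneg (h₁ : IsMonotoneGraph Γ₁) (h₂ : IsMonotoneGraph Γ₂) : 0 ≤ rho' Γ₁ Γ₂ :=
  add_nonneg (abs_nonneg _) (sup_nonneg' h₁ h₂)

lemma hd_key {A B : Set (ℝ × ℝ)} (hA : IsMonotoneGraph A) (hB : IsMonotoneGraph B)
    {D S : ℝ} (hD : |rotLen A - rotLen B| ≤ D) (hS0 : 0 ≤ S)
    (hSbd : ∀ s ∈ Icc 0 (min (rotLen A) (rotLen B)), |rotFun A s - rotFun B s| ≤ S) :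
    ∀ p ∈ A, ∃ q ∈ B, dist p q ≤ D + S := by
  intro p hp
  have hD0 : 0 ≤ D := le_trans (abs_nonneg _) hD
  set s := p.1 + p.2 with hsdef
  have hsmem : s ∈ Icc 0 (rotLen A) := sum_mem hA hp
  set s' := min s (rotLen B) with hs'def
  have hs'A : s' ∈ Icc 0 (rotLen A) :=
    ⟨le_min hsmem.1 (rotLen_nonneg hB), le_trans (min_le_left _ _) hsmem.2⟩
  have hs'B : s' ∈ Icc 0 (rotLen B) := ⟨hs'A.1, min_le_right _ _⟩
  have hs'min : s' ∈ Icc 0 (min (rotLen A) (rotLen B)) := ⟨hs'A.1, le_min hs'A.2 hs'B.2⟩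
  obtain ⟨q, hq, hqs⟩ := exists_point hB hs'B
  refine ⟨q, hq, ?_⟩
  have hss' : |s - s'| ≤ D := by
    rcases le_total s (rotLen B) with h | h
    · rw [hs'def, min_eq_left h]; simpa using hD0
    · have h1 : s' = rotLen B := min_eq_right h
      have h2 : rotLen A - rotLen B ≤ |rotLen A - rotLen B| := le_abs_self _
      rw [abs_of_nonneg (by rw [h1]; linarith)]
      rw [h1]; linarith [hsmem.2]
  have hlipA : |rotFun A s - rotFun A s'| ≤ |s - s'| := by
    have := (lip hA).dist_le_mul s hsmem s' hs'A
    simpa [Real.dist_eq] using this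
  have hGs' : |rotFun A s' - rotFun B s'| ≤ S := hSbd s' hs'min
  have hb : |rotFun A s - rotFun B s'| ≤ D + S :=
    calc |rotFun A s - rotFun B s'|
        ≤ |rotFun A s - rotFun A s'| + |rotFun A s' - rotFun B s'| := abs_sub_le _ _ _
      _ ≤ D + S := by linarith
  have hpe := point_eq hA hp
  have hqe := point_eq hB hq
  rw [hqs] at hqe
  rw [hpe, hqe, Prod.dist_eq]
  simp only [Real.dist_eq]
  have g1 := abs_le.mp hss'
  have g2 := abs_le.mp hb
  apply max_le <;> rw [abs_le] <;> constructor <;>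
    · simp only [hsdef] at g1 g2 ⊢; linarith [g1.1, g1.2, g2.1, g2.2]

/-- Hausdorff distance is at most ρ'. -/
lemma hd_le_rho' (h₁ : IsMonotoneGraph Γ₁) (h₂ : IsMonotoneGraph Γ₂) :
    Metric.hausdorffDist Γ₁ Γ₂ ≤ rho' Γ₁ Γ₂ := by
  apply Metric.hausdorffDist_le_of_mem_dist (rho'_nonneg h₁ h₂)
  · exact hd_key h₁ h₂ le_rfl (sup_nonneg' h₁ h₂)
      (fun s hs => le_csSup (sup_bddAbove h₁ h₂) (mem_image_of_mem _ hs))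
  · apply hd_key h₂ h₁ (by rw [abs_sub_comm]) (sup_nonneg' h₁ h₂)
    intro s hs
    rw [abs_sub_comm]
    rw [min_comm] at hs
    exact le_csSup (sup_bddAbove h₁ h₂) (mem_image_of_mem _ hs)

lemma edist_ne_top (h₁ : IsMonotoneGraph Γ₁) (h₂ : IsMonotoneGraph Γ₂) :
    EMetric.hausdorffEdist Γ₁ Γ₂ ≠ ⊤ :=
  Metric.hausdorffEdist_ne_top_of_nonempty_of_bounded ⟨_, h₁.2.2.1⟩ ⟨_, h₂.2.2.1⟩
    h₁.1.isBounded h₂.1.isBounded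

lemma exists_close (h₁ : IsMonotoneGraph Γ₁) (h₂ : IsMonotoneGraph Γ₂) {p : ℝ × ℝ}
    (hp : p ∈ Γ₁) : ∃ q ∈ Γ₂, dist p q ≤ Metric.hausdorffDist Γ₁ Γ₂ := by
  obtain ⟨q, hq, hiq⟩ := h₂.1.exists_infDist_eq_dist ⟨_, h₂.2.2.1⟩ p
  exact ⟨q, hq, by
    rw [← hiq]; exact Metric.infDist_le_hausdorffDist_of_mem hp (edist_ne_top h₁ h₂)⟩

lemma rotLen_le (h₁ : IsMonotoneGraph Γ₁) (h₂ : IsMonotoneGraph Γ₂) :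
    rotLen Γ₁ ≤ rotLen Γ₂ + 2 * Metric.hausdorffDist Γ₁ Γ₂ := by
  obtain ⟨pm, hpm, hpmeq⟩ :=
    exists_point h₁ (right_mem_Icc.mpr (rotLen_nonneg h₁))
  obtain ⟨q, hq, hpq⟩ := exists_close h₁ h₂ hpm
  have h1 : |pm.1 - q.1| ≤ dist pm q := by
    rw [← Real.dist_eq, Prod.dist_eq]; exact le_max_left _ _
  have h2 : |pm.2 - q.2| ≤ dist pm q := by
    rw [← Real.dist_eq, Prod.dist_eq]; exact le_max_right _ _
  have h3 := sum_le_rotLen h₂ hq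
  have a1 := abs_le.mp h1
  have a2 := abs_le.mp h2
  linarith [a1.1, a2.1]

lemma rotLen_diff_le (h₁ : IsMonotoneGraph Γ₁) (h₂ : IsMonotoneGraph Γ₂) :
    |rotLen Γ₁ - rotLen Γ₂| ≤ 2 * Metric.hausdorffDist Γ₁ Γ₂ := by
  rw [abs_le]
  have u1 := rotLen_le h₁ h₂
  have u2 := rotLen_le h₂ h₁
  rw [Metric.hausdorffDist_comm] at u2
  constructor <;> linarith

lemma sup_le_4hd (h₁ : IsMonotoneGraph Γ₁) (h₂ : IsMonotoneGraph Γ₂) :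
    sSup ((fun s => |rotFun Γ₁ s - rotFun Γ₂ s|) '' Icc 0 (min (rotLen Γ₁) (rotLen Γ₂))) ≤
      4 * Metric.hausdorffDist Γ₁ Γ₂ := by
  apply csSup_le
  · exact (Set.nonempty_Icc.mpr (le_min (rotLen_nonneg h₁) (rotLen_nonneg h₂))).image _
  rintro _ ⟨s, hs, rfl⟩
  obtain ⟨p, hp, hps⟩ :=
    exists_point h₁ ⟨hs.1, le_trans hs.2 (min_le_left _ _)⟩
  obtain ⟨q, hq, hpq⟩ := exists_close h₁ h₂ hp
  have hsΓ₂ : s ∈ Icc 0 (rotLen Γ₂) := ⟨hs.1, le_trans hs.2 (min_le_right _ _)⟩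
  have htΓ₂ : q.1 + q.2 ∈ Icc 0 (rotLen Γ₂) := sum_mem h₂ hq
  have hgs : rotFun Γ₁ s = p.2 - p.1 := by rw [← hps]; exact rotFun_eq h₁ hp
  have hgt : rotFun Γ₂ (q.1 + q.2) = q.2 - q.1 := rotFun_eq h₂ hq
  have h1 : |p.1 - q.1| ≤ dist p q := by
    rw [← Real.dist_eq, Prod.dist_eq]; exact le_max_left _ _
  have h2 : |p.2 - q.2| ≤ dist p q := by
    rw [← Real.dist_eq, Prod.dist_eq]; exact le_max_right _ _
  have a1 := abs_le.mp h1
  have a2 := abs_le.mp h2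
  have hts : |q.1 + q.2 - s| ≤ 2 * dist p q := by
    rw [← hps, abs_le]; constructor <;> linarith [a1.1, a1.2, a2.1, a2.2]
  have hlip : |rotFun Γ₂ (q.1 + q.2) - rotFun Γ₂ s| ≤ |q.1 + q.2 - s| := by
    have := (lip h₂).dist_le_mul (q.1 + q.2) htΓ₂ s hsΓ₂
    simpa [Real.dist_eq] using this
  have hgg : |rotFun Γ₁ s - rotFun Γ₂ (q.1 + q.2)| ≤ 2 * dist p q := by
    rw [hgs, hgt, abs_le]; constructor <;> linarith [a1.1, a1.2, a2.1, a2.2]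
  calc |rotFun Γ₁ s - rotFun Γ₂ s|
      ≤ |rotFun Γ₁ s - rotFun Γ₂ (q.1 + q.2)| + |rotFun Γ₂ (q.1 + q.2) - rotFun Γ₂ s| :=
        abs_sub_le _ _ _
    _ ≤ 4 * Metric.hausdorffDist Γ₁ Γ₂ := by linarith

lemma rho'_le_6hd (h₁ : IsMonotoneGraph Γ₁) (h₂ : IsMonotoneGraph Γ₂) :
    rho' Γ₁ Γ₂ ≤ 6 * Metric.hausdorffDist Γ₁ Γ₂ := by
  have := rotLen_diff_le h₁ h₂
  have := sup_le_4hd h₁ h₂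
  unfold rho'
  linarith

end two

end MGaux

/-- every monotone graph, in the rotated coordinates `s = x + y`, `g = y − x`,
is the graph of a 1-Lipschitz function on `[0, z + f(z)]`; and the Hausdorff metric `ρ` is
equivalent to the metric `ρ'` (they have the same convergent sequences). -/
theorem stmt_3 :
    (∀ Γ : Set (ℝ × ℝ), IsMonotoneGraph Γ →
      LipschitzOnWith 1 (rotFun Γ) (Icc 0 (rotLen Γ)) ∧
      Γ = (fun s => ((s - rotFun Γ s) / 2, (s + rotFun Γ s) / 2)) '' Icc 0 (rotLen Γ)) ∧
    (∀ (Γ : ℕ → Set (ℝ × ℝ)) (L : Set (ℝ × ℝ)),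
      (∀ n, IsMonotoneGraph (Γ n)) → IsMonotoneGraph L →
      (Tendsto (fun n => Metric.hausdorffDist (Γ n) L) atTop (nhds 0) ↔
        Tendsto (fun n => rho' (Γ n) L) atTop (nhds 0))) := by
  constructor
  · intro Γ hΓ
    exact ⟨MGaux.lip hΓ, MGaux.graph_eq hΓ⟩
  · intro Γ L hΓ hL
    constructor
    · intro h
      apply squeeze_zero (fun n => MGaux.rho'_nonneg (hΓ n) hL)
        (fun n => MGaux.rho'_le_6hd (hΓ n) hL)
      have := h.const_mul (6:ℝ)
      simpa using this
    · intro h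
      exact squeeze_zero (fun n => Metric.hausdorffDist_nonneg)
        (fun n => MGaux.hd_le_rho' (hΓ n) hL) h
end

section
/- A set H of monotone graphs is precompact in (𝕄, ρ) if and only if the set {(z₀(Γ), z₁(Γ)) : Γ ∈ H} is bounded in ℝ², where z₀(Γ) = sup{x : (x,y) ∈ Γ} and z₁(Γ) = sup{y : (x,y) ∈ Γ}. -/
open Set Filter

/-- Horizontal extent of a monotone graph. -/
noncomputable def z0 (Γ : Set (ℝ × ℝ)) : ℝ := sSup (Prod.fst '' Γ)

/-- Vertical extent of a monotone graph. -/
noncomputable def z1 (Γ : Set (ℝ × ℝ)) : ℝ := sSup (Prod.snd '' Γ)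

section Aux
open Metric EMetric

lemma mg_nonempty {Γ} (h : IsMonotoneGraph Γ) : Γ.Nonempty := ⟨(0,0), h.2.2.1⟩

lemma mg_fst_le {Γ} (h : IsMonotoneGraph Γ) {p : ℝ × ℝ} (hp : p ∈ Γ) : p.1 ≤ z0 Γ :=
  le_csSup (h.1.image continuous_fst).bddAbove ⟨p, hp, rfl⟩

lemma mg_snd_le {Γ} (h : IsMonotoneGraph Γ) {p : ℝ × ℝ} (hp : p ∈ Γ) : p.2 ≤ z1 Γ :=
  le_csSup (h.1.image continuous_snd).bddAbove ⟨p, hp, rfl⟩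

lemma mg_z0_nonneg {Γ} (h : IsMonotoneGraph Γ) : 0 ≤ z0 Γ :=
  mg_fst_le h h.2.2.1

lemma mg_z1_nonneg {Γ} (h : IsMonotoneGraph Γ) : 0 ≤ z1 Γ :=
  mg_snd_le h h.2.2.1

lemma mg_norm_le {Γ} (h : IsMonotoneGraph Γ) {p : ℝ × ℝ} (hp : p ∈ Γ) :
    ‖p‖ ≤ ‖((z0 Γ, z1 Γ) : ℝ × ℝ)‖ := by
  have h1 := (h.2.2.2.1 p hp).1
  have h2 := (h.2.2.2.1 p hp).2
  rw [Prod.norm_def, Prod.norm_def]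
  simp only [Real.norm_eq_abs]
  rw [abs_of_nonneg h1, abs_of_nonneg h2, abs_of_nonneg (mg_z0_nonneg h),
    abs_of_nonneg (mg_z1_nonneg h)]
  exact max_le_max (mg_fst_le h hp) (mg_snd_le h hp)

/-- there is a point of Γ with norm at least the norm of the extent pair -/
lemma mg_exists_big {Γ} (h : IsMonotoneGraph Γ) :
    ∃ p ∈ Γ, ‖((z0 Γ, z1 Γ) : ℝ × ℝ)‖ ≤ ‖p‖ := by
  have hz : ‖((z0 Γ, z1 Γ) : ℝ × ℝ)‖ = max (z0 Γ) (z1 Γ) := by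
    rw [Prod.norm_def]
    simp only [Real.norm_eq_abs]
    rw [abs_of_nonneg (mg_z0_nonneg h), abs_of_nonneg (mg_z1_nonneg h)]
  rcases le_total (z0 Γ) (z1 Γ) with hle | hle
  · have hmem : z1 Γ ∈ Prod.snd '' Γ :=
      (h.1.image continuous_snd).sSup_mem ((mg_nonempty h).image _)
    obtain ⟨p, hp, hps⟩ := hmem
    refine ⟨p, hp, ?_⟩
    rw [hz, max_eq_right hle, Prod.norm_def]
    calc z1 Γ = p.2 := hps.symm
    _ ≤ ‖p.2‖ := le_abs_self _
    _ ≤ max ‖p.1‖ ‖p.2‖ := le_max_right _ _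
  · have hmem : z0 Γ ∈ Prod.fst '' Γ :=
      (h.1.image continuous_fst).sSup_mem ((mg_nonempty h).image _)
    obtain ⟨p, hp, hps⟩ := hmem
    refine ⟨p, hp, ?_⟩
    rw [hz, max_eq_left hle, Prod.norm_def]
    calc z0 Γ = p.1 := hps.symm
    _ ≤ ‖p.1‖ := le_abs_self _
    _ ≤ max ‖p.1‖ ‖p.2‖ := le_max_left _ _


lemma limit_mg {G : ℕ → Set (ℝ × ℝ)} (hG : ∀ n, IsMonotoneGraph (G n))
    {L : Set (ℝ × ℝ)} (hLc : IsCompact L) (hLne : L.Nonempty)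
    (hconv : Tendsto (fun n => hausdorffDist (G n) L) atTop (nhds 0)) :
    IsMonotoneGraph L := by
  have hfin : ∀ n, hausdorffEdist (G n) L ≠ ⊤ := fun n =>
    hausdorffEdist_ne_top_of_nonempty_of_bounded (mg_nonempty (hG n)) hLne
      (hG n).1.isBounded hLc.isBounded
  have hfin' : ∀ n, hausdorffEdist L (G n) ≠ ⊤ := fun n => by
    rw [hausdorffEdist, hausdorffEDist_comm]; exact hfin n
  -- approximation of points of L by points of G n
  have happrox : ∀ p ∈ L, ∃ x : ℕ → ℝ × ℝ, (∀ n, x n ∈ G n) ∧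
      Tendsto x atTop (nhds p) := by
    intro p hp
    have hc : ∀ n : ℕ, ∃ y ∈ G n, infDist p (G n) = dist p y := fun n =>
      (hG n).1.exists_infDist_eq_dist (mg_nonempty (hG n)) p
    choose x hx hdx using hc
    refine ⟨x, hx, ?_⟩
    rw [tendsto_iff_dist_tendsto_zero]
    have hle : ∀ n, dist (x n) p ≤ hausdorffDist (G n) L := by
      intro n
      rw [dist_comm, ← hdx n, hausdorffDist_comm]
      exact infDist_le_hausdorffDist_of_mem hp (hfin' n)
    exact squeeze_zero (fun n => dist_nonneg) hle hconv
  -- (0,0) ∈ L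
  have h00 : (0, 0) ∈ L := by
    rw [hLc.isClosed.mem_iff_infDist_zero hLne]
    have hle : ∀ n, infDist ((0,0) : ℝ × ℝ) L ≤ hausdorffDist (G n) L := fun n =>
      infDist_le_hausdorffDist_of_mem (hG n).2.2.1 (hfin n)
    have := ge_of_tendsto hconv (Eventually.of_forall hle)
    exact le_antisymm this infDist_nonneg
  -- nonneg coordinates
  have hnonneg : ∀ p ∈ L, 0 ≤ p.1 ∧ 0 ≤ p.2 := by
    intro p hp
    obtain ⟨x, hx, hxt⟩ := happrox p hp
    exact ⟨ge_of_tendsto ((continuous_fst.tendsto p).comp hxt)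
        (Eventually.of_forall fun n => ((hG n).2.2.2.1 _ (hx n)).1),
      ge_of_tendsto ((continuous_snd.tendsto p).comp hxt)
        (Eventually.of_forall fun n => ((hG n).2.2.2.1 _ (hx n)).2)⟩
  -- monotone
  have hmono : ∀ p ∈ L, ∀ q ∈ L, p.1 < q.1 → p.2 ≤ q.2 := by
    intro p hp q hq hlt
    obtain ⟨x, hx, hxt⟩ := happrox p hp
    obtain ⟨y, hy, hyt⟩ := happrox q hq
    have h1 : Tendsto (fun n => (x n).1) atTop (nhds p.1) :=
      (continuous_fst.tendsto p).comp hxt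
    have h2 : Tendsto (fun n => (y n).1) atTop (nhds q.1) :=
      (continuous_fst.tendsto q).comp hyt
    have h3 : Tendsto (fun n => (x n).2) atTop (nhds p.2) :=
      (continuous_snd.tendsto p).comp hxt
    have h4 : Tendsto (fun n => (y n).2) atTop (nhds q.2) :=
      (continuous_snd.tendsto q).comp hyt
    have hev : ∀ᶠ n in atTop, (x n).1 < (y n).1 := h1.eventually_lt h2 hlt
    exact le_of_tendsto_of_tendsto h3 h4
      (hev.mono fun n hn => (hG n).2.2.2.2 _ (hx n) _ (hy n) hn)
  -- connected
  have hconn : IsPreconnected L := by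
    rw [isPreconnected_iff_subset_of_fully_disjoint_closed hLc.isClosed]
    intro A B hA hB hcover hdisj
    by_contra hcon
    push_neg at hcon
    obtain ⟨hnA, hnB⟩ := hcon
    obtain ⟨a0, ha0L, ha0⟩ := not_subset.mp hnB
    obtain ⟨b0, hb0L, hb0⟩ := not_subset.mp hnA
    -- a0 ∈ A, b0 ∈ B
    have ha0A : a0 ∈ A := (hcover ha0L).resolve_right ha0
    have hb0B : b0 ∈ B := (hcover hb0L).resolve_left hb0
    set A' := L ∩ A with hA'
    set B' := L ∩ B with hB'
    have hdisj' : Disjoint A' B' := hdisj.mono inter_subset_right inter_subset_right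
    have hcA' : IsCompact A' := hLc.inter_right hA
    have hcB' : IsCompact B' := hLc.inter_right hB
    obtain ⟨δ, hδpos, hth⟩ := hdisj'.exists_thickenings hcA' hcB'.isClosed
    have hδev : ∀ᶠ n in atTop, hausdorffDist (G n) L < δ :=
      hconv.eventually (gt_mem_nhds hδpos)
    obtain ⟨n, hn⟩ := hδev.exists
    -- G n is covered by the two disjoint open thickenings
    have hcov : G n ⊆ thickening δ A' ∪ thickening δ B' := by
      intro x hxG
      have : infDist x L < δ :=
        lt_of_le_of_lt (infDist_le_hausdorffDist_of_mem hxG (hfin n)) hn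
      have hxth : x ∈ thickening δ L :=
        (mem_thickening_iff_infDist_lt hLne).mpr this
      have hLsub : L ⊆ A' ∪ B' := fun z hz => (hcover hz).imp
        (fun h => ⟨hz, h⟩) (fun h => ⟨hz, h⟩)
      have : thickening δ L ⊆ thickening δ (A' ∪ B') := thickening_subset_of_subset δ hLsub
      rw [thickening_union] at this
      exact this hxth
    -- G n meets each thickening
    have hmeet : ∀ c ∈ L, ∃ y ∈ G n, dist c y < δ := by
      intro c hc
      obtain ⟨y, hyG, hyd⟩ := (hG n).1.exists_infDist_eq_dist (mg_nonempty (hG n)) c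
      refine ⟨y, hyG, ?_⟩
      rw [← hyd]
      have hle2 : infDist c (G n) ≤ hausdorffDist (G n) L := by
        rw [hausdorffDist_comm]
        exact infDist_le_hausdorffDist_of_mem hc (hfin' n)
      exact lt_of_le_of_lt hle2 hn
    obtain ⟨ya, hyaG, hyad⟩ := hmeet a0 ha0L
    obtain ⟨yb, hybG, hybd⟩ := hmeet b0 hb0L
    have hmA : (G n ∩ thickening δ A').Nonempty :=
      ⟨ya, hyaG, mem_thickening_iff.mpr ⟨a0, ⟨ha0L, ha0A⟩, by rwa [dist_comm]⟩⟩
    have hmB : (G n ∩ thickening δ B').Nonempty :=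
      ⟨yb, hybG, mem_thickening_iff.mpr ⟨b0, ⟨hb0L, hb0B⟩, by rwa [dist_comm]⟩⟩
    obtain ⟨z, hz⟩ := (hG n).2.1.isPreconnected (thickening δ A') (thickening δ B')
      isOpen_thickening isOpen_thickening hcov hmA hmB
    exact hth.ne_of_mem hz.2.1 hz.2.2 rfl
  exact ⟨hLc, ⟨hLne, hconn⟩, h00, hnonneg, hmono⟩

end Aux

open Metric EMetric in
/-- a set `H` of monotone graphs is precompact in `(𝕄, ρ)` (every sequence in `H`
has a subsequence converging in Hausdorff distance to a monotone graph) iff the set of extent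
pairs `(z₀(Γ), z₁(Γ))`, `Γ ∈ H`, is bounded in `ℝ²`. -/
theorem stmt_5 (H : Set (Set (ℝ × ℝ))) (hH : ∀ Γ ∈ H, IsMonotoneGraph Γ) :
    ((∀ Γ : ℕ → Set (ℝ × ℝ), (∀ n, Γ n ∈ H) →
        ∃ φ : ℕ → ℕ, StrictMono φ ∧ ∃ L : Set (ℝ × ℝ), IsMonotoneGraph L ∧
          Tendsto (fun n => Metric.hausdorffDist (Γ (φ n)) L) atTop (nhds 0)) ↔
      Bornology.IsBounded {q : ℝ × ℝ | ∃ Γ ∈ H, q = (z0 Γ, z1 Γ)}) := by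
  constructor
  · -- precompactness implies boundedness
    intro hpre
    by_contra hb
    rw [isBounded_iff_forall_norm_le] at hb
    push_neg at hb
    have hsel : ∀ n : ℕ, ∃ Γ ∈ H, (n : ℝ) < ‖((z0 Γ, z1 Γ) : ℝ × ℝ)‖ := by
      intro n
      obtain ⟨q, ⟨Γ, hΓ, rfl⟩, hq⟩ := hb n
      exact ⟨Γ, hΓ, hq⟩
    choose G hGH hGn using hsel
    obtain ⟨φ, hφ, L, hL, hconv⟩ := hpre G hGH
    obtain ⟨R, hR⟩ := isBounded_iff_forall_norm_le.mp (hL.1).isBounded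
    have hev : ∀ᶠ n in atTop, hausdorffDist (G (φ n)) L < 1 :=
      hconv.eventually (gt_mem_nhds one_pos)
    obtain ⟨N, hN⟩ := eventually_atTop.mp hev
    set m := max N (⌈R⌉₊ + 2) with hm
    have hmg := hH _ (hGH (φ m))
    obtain ⟨p, hpG, hpn⟩ := mg_exists_big hmg
    have hpbig : (R : ℝ) + 2 ≤ ‖p‖ := by
      have h1 : (m : ℝ) < ‖((z0 (G (φ m)), z1 (G (φ m))) : ℝ × ℝ)‖ := by
        calc (m : ℝ) ≤ (φ m : ℝ) := by exact_mod_cast hφ.le_apply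
        _ < _ := hGn (φ m)
      have h2 : R + 2 ≤ (m : ℝ) := by
        calc R + 2 ≤ (⌈R⌉₊ : ℝ) + 2 := by linarith [Nat.le_ceil R]
        _ = ((⌈R⌉₊ + 2 : ℕ) : ℝ) := by push_cast; ring
        _ ≤ (m : ℝ) := by exact_mod_cast le_max_right N (⌈R⌉₊ + 2)
      linarith
    -- infDist p L is achieved and is < 1, but every point of L is far from p
    have hfin : hausdorffEdist (G (φ m)) L ≠ ⊤ :=
      hausdorffEdist_ne_top_of_nonempty_of_bounded (mg_nonempty hmg)
        (mg_nonempty hL) (hmg.1).isBounded (hL.1).isBounded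
    have hinf : infDist p L < 1 :=
      lt_of_le_of_lt (infDist_le_hausdorffDist_of_mem hpG hfin)
        (hN m (le_max_left _ _))
    obtain ⟨y, hyL, hyd⟩ := (hL.1).exists_infDist_eq_dist (mg_nonempty hL) p
    have : dist p y < 1 := hyd ▸ hinf
    have hfar : (2 : ℝ) ≤ dist p y := by
      have := hR y hyL
      have h3 : ‖p‖ - ‖y‖ ≤ dist p y := by
        rw [dist_eq_norm]; exact norm_sub_norm_le p y
      linarith
    linarith
  · -- boundedness implies precompactness
    intro hb Γ hΓH
    obtain ⟨C, hC⟩ := isBounded_iff_forall_norm_le.mp hb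
    set K := Metric.closedBall (0 : ℝ × ℝ) C with hK
    have hKc : IsCompact K := isCompact_closedBall _ _
    have hsub : ∀ n, Γ n ⊆ K := by
      intro n p hp
      rw [hK, Metric.mem_closedBall, dist_zero_right]
      exact le_trans (mg_norm_le (hH _ (hΓH n)) hp) (hC _ ⟨Γ n, hΓH n, rfl⟩)
    haveI : CompactSpace K := isCompact_iff_compactSpace.mp hKc
    have hscomp : ∀ n, IsCompact (Subtype.val ⁻¹' (Γ n) : Set K) := fun n =>
      ((hH _ (hΓH n)).1.isClosed.preimage continuous_subtype_val).isCompact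
    have hsne : ∀ n, (Subtype.val ⁻¹' (Γ n) : Set K).Nonempty := fun n =>
      ⟨⟨((0:ℝ),(0:ℝ)), hsub n ((hH _ (hΓH n)).2.2.1)⟩, (hH _ (hΓH n)).2.2.1⟩
    set F : ℕ → TopologicalSpace.NonemptyCompacts K := fun n =>
      ⟨⟨_, hscomp n⟩, hsne n⟩ with hF
    obtain ⟨L', φ, hφ, hconv'⟩ := CompactSpace.tendsto_subseq F
    set L : Set (ℝ × ℝ) := Subtype.val '' (L' : Set K) with hLdef
    have hLc : IsCompact L := L'.isCompact.image continuous_subtype_val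
    have hLne : L.Nonempty := L'.nonempty.image _
    have hdist : ∀ n, hausdorffDist (Γ (φ n)) L = dist (F (φ n)) L' := by
      intro n
      rw [Metric.NonemptyCompacts.dist_eq]
      have himg : Subtype.val '' ((F (φ n) : Set K)) = Γ (φ n) := by
        rw [hF]
        simp only [TopologicalSpace.NonemptyCompacts.coe_mk,
          TopologicalSpace.Compacts.coe_mk]
        rw [Subtype.image_preimage_coe]
        exact inter_eq_self_of_subset_right (hsub (φ n))
      rw [← himg, hLdef, hausdorffDist_image isometry_subtype_coe]
    have hconvL : Tendsto (fun n => hausdorffDist (Γ (φ n)) L) atTop (nhds 0) := by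
      have := tendsto_iff_dist_tendsto_zero.mp hconv'
      simpa only [Function.comp, hdist] using this
    refine ⟨φ, hφ, L, ?_, hconvL⟩
    exact limit_mg (fun n => hH _ (hΓH (φ n))) hLc hLne hconvL
end

section
/- Under the size-biased branching transition, for every r ∈ ℕ there is a polynomial P_{r−1} of degree r−1 such that E[X_{n+1}^r | X_n] ≤ X_n^r + P_{r−1}(X_n). Consequently, for every r there is a constant c_r such that E[X_n^r] ≤ c_r n^r for all n ≥ 1, when X_0 = 1. -/
open Finset

section aux

variable {D : ℕ} {p : Fin (D + 1) → ℝ}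

/-- `B m = Σ i^m p i`. -/
noncomputable def sbB (D : ℕ) (p : Fin (D + 1) → ℝ) (m : ℕ) : ℝ :=
  ∑ i : Fin (D + 1), ((i : ℕ) : ℝ) ^ m * p i

lemma sbB_zero (hsum : ∑ i, p i = 1) : sbB D p 0 = 1 := by
  simp [sbB, hsum]

lemma sbB_one (hmean : ∑ i, (i.1 : ℝ) * p i = 1) : sbB D p 1 = 1 := by
  simpa [sbB] using hmean

lemma sbB_nonneg (hp : ∀ i, 0 ≤ p i) (m : ℕ) : 0 ≤ sbB D p m :=
  Finset.sum_nonneg fun i _ => mul_nonneg (by positivity) (hp i)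

lemma sbB_le (hp : ∀ i, 0 ≤ p i) (hsum : ∑ i, p i = 1) (m : ℕ) :
    sbB D p m ≤ (D : ℝ) ^ m := by
  calc sbB D p m ≤ ∑ i, (D : ℝ) ^ m * p i := by
        apply Finset.sum_le_sum; intro i _
        apply mul_le_mul_of_nonneg_right _ (hp i)
        apply pow_le_pow_left₀ (by positivity)
        exact_mod_cast Nat.lt_succ_iff.mp i.isLt
    _ = (D : ℝ) ^ m := by rw [← Finset.mul_sum, hsum, mul_one]

lemma sb_expand (D : ℕ) (p : Fin (D + 1) → ℝ) (k s : ℕ) :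
    ∑ f : Fin k → Fin (D + 1), ((∑ j, ((f j : ℕ) : ℝ)) ^ s) * ∏ j, p (f j)
      = ∑ g : Fin s → Fin k, ∏ j : Fin k,
          sbB D p ((univ.filter fun t => g t = j).card) := by
  have h1 : ∀ f : Fin k → Fin (D + 1), ((∑ j, ((f j : ℕ) : ℝ)) ^ s)
      = ∑ g : Fin s → Fin k, ∏ t, ((f (g t) : ℕ) : ℝ) :=
    fun f => Fintype.sum_pow _ s
  simp_rw [h1, Finset.sum_mul]
  rw [Finset.sum_comm]
  refine Finset.sum_congr rfl fun g _ => ?_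
  have h2 : ∀ f : Fin k → Fin (D + 1),
      (∏ t, ((f (g t) : ℕ) : ℝ)) * ∏ j, p (f j)
      = ∏ j, (((f j : ℕ) : ℝ) ^ ((univ.filter fun t => g t = j).card) * p (f j)) := by
    intro f
    rw [Finset.prod_mul_distrib]
    congr 1
    rw [← Finset.prod_fiberwise' univ g (fun j => ((f j : ℕ) : ℝ))]
    exact Finset.prod_congr rfl fun j _ => Finset.prod_const _
  simp_rw [h2]
  rw [show (∏ j : Fin k, sbB D p ((univ.filter fun t => g t = j).card))
      = ∑ f : Fin k → Fin (D + 1), ∏ j,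
        (((f j : ℕ) : ℝ) ^ ((univ.filter fun t => g t = j).card) * p (f j)) from
    Fintype.prod_sum (κ := fun _ : Fin k => Fin (D + 1))
      (fun j i => ((i : ℕ) : ℝ) ^ ((univ.filter fun t => g t = j).card) * p i)]

lemma fib_sum (k s : ℕ) (g : Fin s → Fin k) :
    ∑ j, (univ.filter fun t => g t = j).card = s := by
  rw [← Finset.card_eq_sum_card_fiberwise (fun t (_ : t ∈ univ) => Finset.mem_univ (g t))]
  simp


lemma term_le (hp : ∀ i, 0 ≤ p i) (hsum : ∑ i, p i = 1) {k s : ℕ} (g : Fin s → Fin k) :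
    (∏ j : Fin k, sbB D p ((univ.filter fun t => g t = j).card)) ≤ (D : ℝ) ^ s := by
  calc (∏ j : Fin k, sbB D p ((univ.filter fun t => g t = j).card))
      ≤ ∏ j : Fin k, (D : ℝ) ^ ((univ.filter fun t => g t = j).card) :=
        Finset.prod_le_prod (fun j _ => sbB_nonneg hp _) (fun j _ => sbB_le hp hsum _)
    _ = (D : ℝ) ^ (∑ j, (univ.filter fun t => g t = j).card) :=
        Finset.prod_pow_eq_pow_sum _ _ _
    _ = (D : ℝ) ^ s := by rw [fib_sum]

lemma term_inj (hsum : ∑ i, p i = 1) (hmean : ∑ i, (i.1 : ℝ) * p i = 1)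
    {k s : ℕ} {g : Fin s → Fin k} (hg : Function.Injective g) :
    (∏ j : Fin k, sbB D p ((univ.filter fun t => g t = j).card)) = 1 := by
  refine Finset.prod_eq_one fun j _ => ?_
  have h1 : (univ.filter fun t => g t = j).card ≤ 1 := by
    refine Finset.card_le_one.mpr fun a ha b hb => ?_
    simp only [Finset.mem_filter] at ha hb
    exact hg (ha.2.trans hb.2.symm)
  rcases Nat.le_one_iff_eq_zero_or_eq_one.mp h1 with h | h <;> rw [h]
  · exact sbB_zero hsum
  · exact sbB_one hmean

lemma pair_card (k s : ℕ) {a b : Fin (s + 1)} (hab : a ≠ b) :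
    (univ.filter fun g : Fin (s + 1) → Fin k => g a = g b).card ≤ k ^ s := by
  have hcard : ((univ : Finset (Fin s → Fin k))).card = k ^ s := by simp
  rw [← hcard]
  apply Finset.card_le_card_of_injOn (fun g => g ∘ b.succAbove) (fun g _ => mem_univ _)
  intro g hg g' hg' hfg
  simp only [Finset.coe_filter, Set.mem_setOf_eq, mem_univ, true_and] at hg hg'
  funext t
  by_cases ht : t = b
  · subst ht
    obtain ⟨u, hu⟩ := Fin.exists_succAbove_eq hab
    have h3 : g a = g' a := by
      have := congrFun hfg u
      simpa [Function.comp, hu] using this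
    rw [← hg, h3, hg']
  · obtain ⟨u, hu⟩ := Fin.exists_succAbove_eq ht
    have := congrFun hfg u
    simpa [Function.comp, hu] using this

lemma noninj_card (k s : ℕ) :
    ((univ : Finset (Fin (s + 1) → Fin k)).filter fun g => ¬ Function.Injective g).card
      ≤ (s + 1) ^ 2 * k ^ s := by
  classical
  set P := (univ : Finset (Fin (s + 1) × Fin (s + 1))).filter fun q => q.1 ≠ q.2 with hP
  have hsub : ((univ : Finset (Fin (s + 1) → Fin k)).filter fun g => ¬ Function.Injective g)
      ⊆ P.biUnion fun q => univ.filter fun g => g q.1 = g q.2 := by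
    intro g hg
    simp only [Finset.mem_filter, mem_univ, true_and] at hg
    obtain ⟨a, b, hab, hne⟩ := Function.not_injective_iff.mp hg
    exact Finset.mem_biUnion.mpr ⟨(a, b), by simp [hP, hne], by simp [hab]⟩
  calc ((univ : Finset (Fin (s + 1) → Fin k)).filter fun g => ¬ Function.Injective g).card
      ≤ (P.biUnion fun q => univ.filter fun g : Fin (s+1) → Fin k => g q.1 = g q.2).card :=
        Finset.card_le_card hsub
    _ ≤ ∑ q ∈ P, (univ.filter fun g : Fin (s + 1) → Fin k => g q.1 = g q.2).card :=
        Finset.card_biUnion_le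
    _ ≤ ∑ _q ∈ P, k ^ s := by
        refine Finset.sum_le_sum fun q hq => pair_card k s ?_
        simpa [hP] using (Finset.mem_filter.mp hq).2
    _ = P.card * k ^ s := by rw [Finset.sum_const, smul_eq_mul]
    _ ≤ (s + 1) ^ 2 * k ^ s := by
        apply Nat.mul_le_mul_right
        calc P.card ≤ (univ : Finset (Fin (s + 1) × Fin (s + 1))).card :=
              Finset.card_filter_le _ _
          _ = (s + 1) ^ 2 := by simp [sq]


lemma T_le (hp : ∀ i, 0 ≤ p i) (hsum : ∑ i, p i = 1) (hmean : ∑ i, (i.1 : ℝ) * p i = 1)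
    (k r : ℕ) :
    (∑ g : Fin (r + 1) → Fin k, ∏ j : Fin k, sbB D p ((univ.filter fun t => g t = j).card))
      ≤ (k : ℝ) ^ (r + 1) + ((r : ℝ) + 1) ^ 2 * (k : ℝ) ^ r * (D : ℝ) ^ (r + 1) := by
  classical
  rw [← Finset.sum_filter_add_sum_filter_not univ
    (fun g : Fin (r + 1) → Fin k => Function.Injective g)]
  apply add_le_add
  · have h1 : (∑ g ∈ univ.filter (fun g : Fin (r + 1) → Fin k => Function.Injective g),
        ∏ j : Fin k, sbB D p ((univ.filter fun t => g t = j).card))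
        = ((univ.filter (fun g : Fin (r + 1) → Fin k => Function.Injective g)).card : ℝ) := by
      rw [Finset.sum_congr rfl (fun g hg => term_inj hsum hmean (Finset.mem_filter.mp hg).2)]
      simp
    rw [h1]
    have h2 : (univ.filter (fun g : Fin (r + 1) → Fin k => Function.Injective g)).card
        ≤ k ^ (r + 1) := by
      calc _ ≤ (univ : Finset (Fin (r + 1) → Fin k)).card := Finset.card_filter_le _ _
        _ = k ^ (r + 1) := by simp
    exact_mod_cast h2
  · calc (∑ g ∈ univ.filter (fun g : Fin (r + 1) → Fin k => ¬ Function.Injective g),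
          ∏ j : Fin k, sbB D p ((univ.filter fun t => g t = j).card))
        ≤ (univ.filter (fun g : Fin (r + 1) → Fin k => ¬ Function.Injective g)).card
            • (D : ℝ) ^ (r + 1) :=
          Finset.sum_le_card_nsmul _ _ _ (fun g _ => term_le hp hsum g)
      _ = ((univ.filter (fun g : Fin (r + 1) → Fin k => ¬ Function.Injective g)).card : ℝ)
            * (D : ℝ) ^ (r + 1) := by rw [nsmul_eq_mul]
      _ ≤ (((r + 1) ^ 2 * k ^ r : ℕ) : ℝ) * (D : ℝ) ^ (r + 1) := by
          apply mul_le_mul_of_nonneg_right _ (by positivity)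
          exact_mod_cast noninj_card k r
      _ = ((r : ℝ) + 1) ^ 2 * (k : ℝ) ^ r * (D : ℝ) ^ (r + 1) := by push_cast; ring

end aux


/-- Transition kernel of the size-biased branching chain: probability of going from `k` to `m`. -/
noncomputable def sbTrans (D : ℕ) (p : Fin (D + 1) → ℝ) (k m : ℕ) : ℝ :=
  ∑ f : Fin k → Fin (D + 1),
    if (∑ j, (f j : ℕ)) = m then ((m : ℝ) / k) * ∏ j, p (f j) else 0

/-- Law of the chain at time `n`, started from `X₀ = 1`. -/
noncomputable def sbMass (D : ℕ) (p : Fin (D + 1) → ℝ) : ℕ → ℕ → ℝ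
  | 0 => fun m => if m = 1 then 1 else 0
  | n + 1 => fun m => ∑ k ∈ range (D ^ n + 1), sbMass D p n k * sbTrans D p k m

/-- Conditional `r`-th moment `E[X_{n+1}^r | X_n = k] = (1/k) Σ_f (Σ f)^{r+1} Π p`. -/
noncomputable def sbCondMoment (D : ℕ) (p : Fin (D + 1) → ℝ) (k r : ℕ) : ℝ :=
  (1 / (k : ℝ)) * ∑ f : Fin k → Fin (D + 1),
    ((∑ j, ((f j : ℕ) : ℝ)) ^ (r + 1)) * ∏ j, p (f j)

section aux2

variable {D : ℕ} {p : Fin (D + 1) → ℝ}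

lemma condMoment_succ_le (hp : ∀ i, 0 ≤ p i) (hsum : ∑ i, p i = 1)
    (hmean : ∑ i, (i.1 : ℝ) * p i = 1) (r k : ℕ) :
    sbCondMoment D p k (r + 1)
      ≤ (k : ℝ) ^ (r + 1) + ((r : ℝ) + 2) ^ 2 * (D : ℝ) ^ (r + 2) * (k : ℝ) ^ r := by
  rcases Nat.eq_zero_or_pos k with rfl | hk
  · simp only [sbCondMoment, Nat.cast_zero, div_zero, zero_mul]
    positivity
  · have hk0 : (0 : ℝ) < k := by exact_mod_cast hk
    unfold sbCondMoment
    rw [sb_expand]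
    have hT := T_le hp hsum hmean k (r + 1)
    push_cast at hT
    calc (1 / (k : ℝ)) * ∑ g : Fin (r + 1 + 1) → Fin k,
          ∏ j : Fin k, sbB D p ((univ.filter fun t => g t = j).card)
        ≤ (1 / (k : ℝ)) * ((k : ℝ) ^ (r + 1 + 1)
            + ((r : ℝ) + 1 + 1) ^ 2 * (k : ℝ) ^ (r + 1) * (D : ℝ) ^ (r + 1 + 1)) :=
          mul_le_mul_of_nonneg_left hT (by positivity)
      _ = (k : ℝ) ^ (r + 1) + ((r : ℝ) + 2) ^ 2 * (D : ℝ) ^ (r + 2) * (k : ℝ) ^ r := by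
          field_simp
          ring

lemma condMoment_mean_one (hsum : ∑ i, p i = 1) (hmean : ∑ i, (i.1 : ℝ) * p i = 1)
    {k : ℕ} (hk : 1 ≤ k) : sbCondMoment D p k 0 = 1 := by
  have hk0 : (k : ℝ) ≠ 0 := by positivity
  unfold sbCondMoment
  rw [sb_expand D p k 1]
  rw [Finset.sum_congr rfl
    (fun g _ => term_inj hsum hmean (fun a b _ => Subsingleton.elim a b))]
  simp [Finset.sum_const, hk0]

lemma condMoment_zero (r : ℕ) : sbCondMoment D p 0 r = 0 := by
  simp [sbCondMoment]

lemma trans_nonneg (hp : ∀ i, 0 ≤ p i) (k m : ℕ) : 0 ≤ sbTrans D p k m := by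
  refine Finset.sum_nonneg fun f _ => ?_
  split
  · exact mul_nonneg (by positivity) (Finset.prod_nonneg fun j _ => hp (f j))
  · exact le_refl _

lemma mass_nonneg (hp : ∀ i, 0 ≤ p i) (n m : ℕ) : 0 ≤ sbMass D p n m := by
  induction n generalizing m with
  | zero => simp only [sbMass]; split <;> norm_num
  | succ n ih =>
      exact Finset.sum_nonneg fun k _ => mul_nonneg (ih k) (trans_nonneg hp k m)

lemma trans_to_zero (k : ℕ) : sbTrans D p k 0 = 0 := by
  simp [sbTrans]

lemma mass_at_zero (n : ℕ) : sbMass D p n 0 = 0 := by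
  induction n with
  | zero => simp [sbMass]
  | succ n ih => simp [sbMass, trans_to_zero]

lemma sum_trans (k r N : ℕ) (hN : D * k < N) :
    ∑ m ∈ range N, sbTrans D p k m * (m : ℝ) ^ r = sbCondMoment D p k r := by
  unfold sbTrans sbCondMoment
  simp_rw [Finset.sum_mul, ite_mul, zero_mul]
  rw [Finset.sum_comm, Finset.mul_sum]
  refine Finset.sum_congr rfl fun f _ => ?_
  have hmem : (∑ j, (f j : ℕ)) ∈ range N := by
    rw [Finset.mem_range]
    calc (∑ j, (f j : ℕ)) ≤ ∑ _j : Fin k, D :=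
          Finset.sum_le_sum fun j _ => Nat.lt_succ_iff.mp (f j).isLt
      _ = k * D := by simp [Finset.sum_const, smul_eq_mul]
      _ = D * k := Nat.mul_comm _ _
      _ < N := hN
  rw [Finset.sum_ite_eq (range N) (∑ j, (f j : ℕ))
    (fun m => ((m : ℝ) / (k : ℝ) * ∏ j, p (f j)) * (m : ℝ) ^ r), if_pos hmem]
  push_cast
  ring


lemma mass_step (n r : ℕ) :
    ∑ m ∈ range (D ^ (n + 1) + 1), sbMass D p (n + 1) m * (m : ℝ) ^ r
      = ∑ k ∈ range (D ^ n + 1), sbMass D p n k * sbCondMoment D p k r := by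
  simp only [sbMass]
  simp_rw [Finset.sum_mul]
  rw [Finset.sum_comm]
  refine Finset.sum_congr rfl fun k hk => ?_
  simp_rw [mul_assoc]
  rw [← Finset.mul_sum]
  congr 1
  refine sum_trans k r _ ?_
  have hk' : k ≤ D ^ n := Nat.lt_succ_iff.mp (Finset.mem_range.mp hk)
  calc D * k ≤ D * D ^ n := Nat.mul_le_mul_left _ hk'
    _ = D ^ (n + 1) := (pow_succ' D n).symm
    _ < D ^ (n + 1) + 1 := Nat.lt_succ_self _

lemma mass_sum_one (hsum : ∑ i, p i = 1) (hmean : ∑ i, (i.1 : ℝ) * p i = 1) (n : ℕ) :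
    ∑ m ∈ range (D ^ n + 1), sbMass D p n m = 1 := by
  induction n with
  | zero => simp [sbMass, Finset.sum_range_succ]
  | succ n ih =>
      have h := mass_step (D := D) (p := p) n 0
      simp only [pow_zero, mul_one] at h
      rw [h, ← ih]
      refine Finset.sum_congr rfl fun k _ => ?_
      rcases Nat.eq_zero_or_pos k with rfl | hk
      · simp [mass_at_zero]
      · rw [condMoment_mean_one hsum hmean hk, mul_one]

lemma key_bound (hp : ∀ i, 0 ≤ p i) (hsum : ∑ i, p i = 1)
    (hmean : ∑ i, (i.1 : ℝ) * p i = 1) (r : ℕ) :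
    ∃ c : ℝ, 0 ≤ c ∧ ∀ n : ℕ,
      (∑ m ∈ range (D ^ n + 1), sbMass D p n m * (m : ℝ) ^ r) ≤ c * ((n : ℝ) + 1) ^ r := by
  induction r with
  | zero =>
      exact ⟨1, zero_le_one, fun n => by
        simp [mass_sum_one hsum hmean n]⟩
  | succ r ih =>
      obtain ⟨c, hc0, hc⟩ := ih
      set C : ℝ := ((r : ℝ) + 2) ^ 2 * (D : ℝ) ^ (r + 2) with hC
      have hC0 : 0 ≤ C := by positivity
      refine ⟨1 + C * c, by positivity, fun n => ?_⟩
      induction n with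
      | zero =>
          have : ∑ m ∈ range (D ^ 0 + 1), sbMass D p 0 m * (m : ℝ) ^ (r + 1) = 1 := by
            simp [sbMass, Finset.sum_range_succ]
          rw [this]
          have : (1 : ℝ) ≤ 1 + C * c := by nlinarith
          simpa using this
      | succ n ihn =>
          have hrec : ∑ m ∈ range (D ^ (n + 1) + 1), sbMass D p (n + 1) m * (m : ℝ) ^ (r + 1)
              ≤ (∑ m ∈ range (D ^ n + 1), sbMass D p n m * (m : ℝ) ^ (r + 1))
                + C * ∑ m ∈ range (D ^ n + 1), sbMass D p n m * (m : ℝ) ^ r := by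
            rw [mass_step]
            have hpt : ∀ k ∈ range (D ^ n + 1),
                sbMass D p n k * sbCondMoment D p k (r + 1)
                  ≤ sbMass D p n k * ((k : ℝ) ^ (r + 1) + C * (k : ℝ) ^ r) := by
              intro k _
              refine mul_le_mul_of_nonneg_left ?_ (mass_nonneg hp n k)
              have := condMoment_succ_le hp hsum hmean r k
              calc sbCondMoment D p k (r + 1)
                  ≤ (k : ℝ) ^ (r + 1) + ((r : ℝ) + 2) ^ 2 * (D : ℝ) ^ (r + 2) * (k : ℝ) ^ r :=
                    this
                _ = (k : ℝ) ^ (r + 1) + C * (k : ℝ) ^ r := by rw [hC]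
            calc ∑ k ∈ range (D ^ n + 1), sbMass D p n k * sbCondMoment D p k (r + 1)
                ≤ ∑ k ∈ range (D ^ n + 1),
                    sbMass D p n k * ((k : ℝ) ^ (r + 1) + C * (k : ℝ) ^ r) :=
                  Finset.sum_le_sum hpt
              _ = (∑ m ∈ range (D ^ n + 1), sbMass D p n m * (m : ℝ) ^ (r + 1))
                  + C * ∑ m ∈ range (D ^ n + 1), sbMass D p n m * (m : ℝ) ^ r := by
                  rw [Finset.mul_sum, ← Finset.sum_add_distrib]
                  refine Finset.sum_congr rfl fun k _ => ?_
                  ring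
          have h2 : C * ∑ m ∈ range (D ^ n + 1), sbMass D p n m * (m : ℝ) ^ r
              ≤ C * (c * ((n : ℝ) + 1) ^ r) :=
            mul_le_mul_of_nonneg_left (hc n) hC0
          have hx : (0 : ℝ) ≤ (n : ℝ) + 1 := by positivity
          have hpow : ((n : ℝ) + 1) ^ r ≤ ((n : ℝ) + 2) ^ r :=
            pow_le_pow_left₀ hx (by linarith) r
          have hpow1 : ((n : ℝ) + 1) ^ (r + 1) ≤ ((n : ℝ) + 2) ^ (r + 1) :=
            pow_le_pow_left₀ hx (by linarith) (r + 1)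
          have hp0 : (0 : ℝ) ≤ ((n : ℝ) + 1) ^ r := by positivity
          have hgoal : (1 + C * c) * ((n : ℝ) + 1) ^ (r + 1) + C * (c * ((n : ℝ) + 1) ^ r)
              ≤ (1 + C * c) * (((n : ℝ) + 1) + 1) ^ (r + 1) := by
            have e1 : (((n : ℝ) + 1) + 1) ^ (r + 1) = ((n : ℝ) + 2) ^ r * ((n : ℝ) + 2) := by
              rw [show ((n : ℝ) + 1) + 1 = (n : ℝ) + 2 by ring, pow_succ]
            have e2 : ((n : ℝ) + 1) ^ (r + 1) = ((n : ℝ) + 1) ^ r * ((n : ℝ) + 1) := pow_succ _ _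
            have hcc : (0 : ℝ) ≤ C * c := mul_nonneg hC0 hc0
            have h1cc : (0 : ℝ) ≤ 1 + C * c := by linarith
            have t1 : (1 + C * c) * (((n : ℝ) + 1) ^ (r + 1))
                ≤ (1 + C * c) * (((n : ℝ) + 2) ^ r * ((n : ℝ) + 1)) := by
              rw [e2]
              exact mul_le_mul_of_nonneg_left
                (mul_le_mul_of_nonneg_right hpow (by linarith)) h1cc
            have hB0' : (0 : ℝ) ≤ ((n : ℝ) + 2) ^ r := by positivity
            have t2 : C * (c * ((n : ℝ) + 1) ^ r) ≤ (1 + C * c) * ((n : ℝ) + 2) ^ r := by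
              calc C * (c * ((n : ℝ) + 1) ^ r) = (C * c) * ((n : ℝ) + 1) ^ r := by ring
                _ ≤ (C * c) * ((n : ℝ) + 2) ^ r := mul_le_mul_of_nonneg_left hpow hcc
                _ ≤ (1 + C * c) * ((n : ℝ) + 2) ^ r :=
                    mul_le_mul_of_nonneg_right (by linarith) hB0'
            have e3 : (1 + C * c) * (((n : ℝ) + 1) + 1) ^ (r + 1)
                = (1 + C * c) * (((n : ℝ) + 2) ^ r * ((n : ℝ) + 1))
                  + (1 + C * c) * ((n : ℝ) + 2) ^ r := by
              rw [e1]; ring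
            linarith
          push_cast
          calc ∑ m ∈ range (D ^ (n + 1) + 1), sbMass D p (n + 1) m * (m : ℝ) ^ (r + 1)
              ≤ (1 + C * c) * ((n : ℝ) + 1) ^ (r + 1) + C * (c * ((n : ℝ) + 1) ^ r) := by
                linarith [hrec, ihn, h2]
            _ ≤ (1 + C * c) * (((n : ℝ) + 1) + 1) ^ (r + 1) := hgoal

end aux2


/-- `E[X_{n+1}^r | X_n] ≤ X_n^r + P_{r−1}(X_n)` for a polynomial of degree `≤ r−1`,
and consequently `E[X_n^r] ≤ c_r n^r`. -/
theorem stmt_9 (D : ℕ) (p : Fin (D + 1) → ℝ) (hp : ∀ i, 0 ≤ p i)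
    (hsum : ∑ i, p i = 1) (hmean : ∑ i, (i.1 : ℝ) * p i = 1) :
    (∀ r : ℕ, 1 ≤ r → ∃ P : Polynomial ℝ, P.natDegree ≤ r - 1 ∧
      ∀ k : ℕ, 1 ≤ k → sbCondMoment D p k r ≤ (k : ℝ) ^ r + P.eval (k : ℝ)) ∧
    (∀ r : ℕ, 1 ≤ r → ∃ c : ℝ, ∀ n : ℕ, 1 ≤ n →
      (∑ m ∈ range (D ^ n + 1), sbMass D p n m * (m : ℝ) ^ r) ≤ c * (n : ℝ) ^ r) := by
  constructor
  · intro r hr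
    obtain ⟨m, rfl⟩ : ∃ m, r = m + 1 := ⟨r - 1, (Nat.succ_pred_eq_of_pos hr).symm⟩
    refine ⟨Polynomial.C (((m : ℝ) + 2) ^ 2 * (D : ℝ) ^ (m + 2)) * Polynomial.X ^ m, ?_, ?_⟩
    · calc (Polynomial.C (((m : ℝ) + 2) ^ 2 * (D : ℝ) ^ (m + 2)) *
            Polynomial.X ^ m).natDegree
          ≤ ((Polynomial.X : Polynomial ℝ) ^ m).natDegree :=
            Polynomial.natDegree_C_mul_le _ _
        _ = m := Polynomial.natDegree_X_pow m
        _ ≤ m + 1 - 1 := by simp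
    · intro k _
      simp only [Polynomial.eval_mul, Polynomial.eval_C, Polynomial.eval_pow,
        Polynomial.eval_X]
      exact condMoment_succ_le hp hsum hmean m k
  · intro r hr
    obtain ⟨c, hc0, hc⟩ := key_bound hp hsum hmean r
    refine ⟨c * 2 ^ r, fun n hn => ?_⟩
    have hn1 : (1 : ℝ) ≤ (n : ℝ) := by exact_mod_cast hn
    have hpow : ((n : ℝ) + 1) ^ r ≤ (2 * (n : ℝ)) ^ r :=
      pow_le_pow_left₀ (by positivity) (by linarith) r
    calc (∑ m ∈ range (D ^ n + 1), sbMass D p n m * (m : ℝ) ^ r)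
        ≤ c * ((n : ℝ) + 1) ^ r := hc n
      _ ≤ c * (2 * (n : ℝ)) ^ r := mul_le_mul_of_nonneg_left hpow hc0
      _ = c * 2 ^ r * (n : ℝ) ^ r := by rw [mul_pow]; ring
end

section
/- In the size-biased branching chain, the conditional mean of the subpopulation progeny satisfies E[V_{m+1} | V_m = l, X_m = k] = l(1 + μ/k), where μ = B₂ − 1 and B₂ = Σ i² p_i. Equivalently, E[V_{m+1} − V_m | V_m = l, X_m = k] = μ l / k. -/
open Finset

/-- Total offspring of all `k` vertices. -/
def totOff {k D : ℕ} (f : Fin k → Fin (D + 1)) : ℝ := ∑ j, ((f j : ℕ) : ℝ)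

/-- Offspring of the first `l` vertices. -/
def subOff {k D : ℕ} (l : ℕ) (f : Fin k → Fin (D + 1)) : ℝ :=
  ∑ j ∈ univ.filter (fun j : Fin k => (j : ℕ) < l), ((f j : ℕ) : ℝ)

lemma pair_exp {D k : ℕ} (p : Fin (D + 1) → ℝ)
    (hsum : ∑ i, p i = 1) (hmean : ∑ i, (i.1 : ℝ) * p i = 1) (j j' : Fin k) :
    (∑ f : Fin k → Fin (D + 1), ((f j : ℕ) : ℝ) * ((f j' : ℕ) : ℝ) * ∏ i, p (f i)) =
      if j = j' then ∑ i, (i.1 : ℝ) ^ 2 * p i else 1 := by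
  classical
  have key : ∀ φ : Fin k → Fin (D + 1) → ℝ,
      (∑ f : Fin k → Fin (D + 1), ∏ i, φ i (f i)) = ∏ i, ∑ a, φ i a :=
    fun φ => (Fintype.prod_sum φ).symm
  by_cases h : j = j'
  · subst h
    simp only [if_pos rfl]
    rw [show (∑ f : Fin k → Fin (D + 1), ((f j : ℕ) : ℝ) * ((f j : ℕ) : ℝ) * ∏ i, p (f i)) =
        ∑ f : Fin k → Fin (D + 1), ∏ i, (if i = j then ((f i : ℕ) : ℝ) ^ 2 else 1) * p (f i) by
      refine Finset.sum_congr rfl fun f _ => ?_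
      rw [Finset.prod_mul_distrib]
      rw [Finset.prod_ite_eq' Finset.univ j (fun i => ((f i : ℕ) : ℝ) ^ 2)]
      simp [sq]]
    rw [key (fun i a => (if i = j then ((a : ℕ) : ℝ) ^ 2 else 1) * p a)]
    rw [show (∏ i : Fin k, ∑ a : Fin (D + 1),
        (if i = j then ((a : ℕ) : ℝ) ^ 2 else 1) * p a) =
        ∏ i : Fin k, (if i = j then ∑ a : Fin (D + 1), ((a : ℕ) : ℝ) ^ 2 * p a else 1) by
      refine Finset.prod_congr rfl fun i _ => ?_
      by_cases hi : i = j <;> simp [hi, hsum]]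
    rw [Finset.prod_ite_eq' Finset.univ j (fun _ => ∑ a : Fin (D + 1), ((a : ℕ) : ℝ) ^ 2 * p a)]
    simp
  · simp only [if_neg h]
    rw [show (∑ f : Fin k → Fin (D + 1), ((f j : ℕ) : ℝ) * ((f j' : ℕ) : ℝ) * ∏ i, p (f i)) =
        ∑ f : Fin k → Fin (D + 1), ∏ i, (if i = j then ((f i : ℕ) : ℝ) else 1) *
          ((if i = j' then ((f i : ℕ) : ℝ) else 1) * p (f i)) by
      refine Finset.sum_congr rfl fun f _ => ?_
      simp only [Finset.prod_mul_distrib]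
      rw [Finset.prod_ite_eq' Finset.univ j (fun i => ((f i : ℕ) : ℝ)),
        Finset.prod_ite_eq' Finset.univ j' (fun i => ((f i : ℕ) : ℝ))]
      simp; ring]
    rw [key (fun i a => (if i = j then ((a : ℕ) : ℝ) else 1) *
      ((if i = j' then ((a : ℕ) : ℝ) else 1) * p a))]
    rw [show (∏ i : Fin k, ∑ a : Fin (D + 1), (if i = j then ((a : ℕ) : ℝ) else 1) *
        ((if i = j' then ((a : ℕ) : ℝ) else 1) * p a)) = ∏ i : Fin k, (1 : ℝ) by
      refine Finset.prod_congr rfl fun i _ => ?_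
      have hne : j ≠ j' := h
      by_cases hij : i = j
      · simp [hij, hne, hmean]
      · by_cases hij' : i = j'
        · simp [hij', Ne.symm hne]
          simpa [mul_comm] using hmean
        · simp [hij, hij', hsum]]
    simp

/-- `E[V_{m+1} | V_m = l, X_m = k] = l(1 + μ/k)` with `μ = B₂ − 1`; equivalently
`E[V_{m+1} − V_m | V_m = l, X_m = k] = μ l / k`. -/
theorem stmt_11 (D : ℕ) (p : Fin (D + 1) → ℝ) (hp : ∀ i, 0 ≤ p i)
    (hsum : ∑ i, p i = 1) (hmean : ∑ i, (i.1 : ℝ) * p i = 1)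
    (k l : ℕ) (hk : 0 < k) (hl : l ≤ k) :
    (1 / (k : ℝ)) * (∑ f : Fin k → Fin (D + 1), subOff l f * totOff f * ∏ j, p (f j)) =
      (l : ℝ) * (1 + ((∑ i, (i.1 : ℝ) ^ 2 * p i) - 1) / k) ∧
    (1 / (k : ℝ)) * (∑ f : Fin k → Fin (D + 1), subOff l f * totOff f * ∏ j, p (f j)) - l =
      ((∑ i, (i.1 : ℝ) ^ 2 * p i) - 1) * l / k := by
  classical
  set B := ∑ i, (i.1 : ℝ) ^ 2 * p i with hB
  set S := Finset.univ.filter (fun j : Fin k => (j : ℕ) < l) with hS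
  have hScard : S.card = l := by
    have h1 : S.card = ((Finset.range k).filter (· < l)).card := by
      refine Finset.card_bij (fun a _ => (a : ℕ)) ?_ ?_ ?_
      · intro a ha; simp only [hS, Finset.mem_filter, Finset.mem_univ, true_and] at ha
        simp [ha, a.2]
      · intro a _ b _ hab; exact Fin.val_injective hab
      · intro b hb
        simp only [Finset.mem_filter, Finset.mem_range] at hb
        exact ⟨⟨b, hb.1⟩, by simp [hS, hb.2], rfl⟩
    rw [h1]
    have : (Finset.range k).filter (· < l) = Finset.range l := by
      ext x; simp only [Finset.mem_filter, Finset.mem_range]; omega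
    rw [this, Finset.card_range]
  have hmain : (∑ f : Fin k → Fin (D + 1), subOff l f * totOff f * ∏ j, p (f j)) =
      (l : ℝ) * (B + ((k : ℝ) - 1)) := by
    have expand : (∑ f : Fin k → Fin (D + 1), subOff l f * totOff f * ∏ j, p (f j)) =
        ∑ j ∈ S, ∑ j' : Fin k,
          ∑ f : Fin k → Fin (D + 1), ((f j : ℕ) : ℝ) * ((f j' : ℕ) : ℝ) * ∏ i, p (f i) := by
      have step : ∀ f : Fin k → Fin (D + 1),
          subOff l f * totOff f * ∏ i, p (f i) =
          ∑ j ∈ S, ∑ j' : Fin k, ((f j : ℕ) : ℝ) * ((f j' : ℕ) : ℝ) * ∏ i, p (f i) := by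
        intro f
        simp only [subOff, totOff, ← hS]
        rw [Finset.sum_mul_sum, Finset.sum_mul]
        refine Finset.sum_congr rfl fun j _ => ?_
        rw [Finset.sum_mul]
      rw [Finset.sum_congr rfl fun f _ => step f]
      rw [Finset.sum_comm]
      refine Finset.sum_congr rfl fun j _ => Finset.sum_comm
    rw [expand]
    have inner : ∀ j : Fin k,
        (∑ j' : Fin k, ∑ f : Fin k → Fin (D + 1),
          ((f j : ℕ) : ℝ) * ((f j' : ℕ) : ℝ) * ∏ i, p (f i)) = B + ((k : ℝ) - 1) := by
      intro j
      simp only [pair_exp p hsum hmean j, ← hB]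
      have : ∀ j' : Fin k, (if j = j' then B else (1 : ℝ)) =
          (if j = j' then B - 1 else 0) + 1 := by
        intro j'; split <;> ring
      simp only [this, Finset.sum_add_distrib, Finset.sum_ite_eq, Finset.mem_univ, if_true,
        Finset.sum_const, Finset.card_univ, Fintype.card_fin, nsmul_eq_mul, mul_one]
      ring
    rw [Finset.sum_congr rfl fun j _ => inner j, Finset.sum_const, hScard, nsmul_eq_mul]
  have hk' : (k : ℝ) ≠ 0 := Nat.cast_ne_zero.mpr hk.ne'
  constructor
  · rw [hmain]
    have h2 : (1:ℝ) + (B-1)/(k:ℝ) = ((k:ℝ) + (B-1))/(k:ℝ) := by rw [add_div, div_self hk']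
    rw [h2, one_div, inv_mul_eq_div, mul_div_assoc', div_eq_div_iff hk' hk']
    ring
  · rw [hmain]
    rw [one_div, inv_mul_eq_div, div_sub' hk', div_eq_div_iff hk' hk']
    ring
end

section
/- In the size-biased branching chain, for every even integer r ≥ 2 there is a constant C'_r, independent of k, such that E[(V_{m+1} − V_m)^r | V_m = l, X_m = k] ≤ C'_r l^{r/2}. A key step: the quantity Σ_{i₁,...,i_l} ((i₁−1)+⋯+(i_l−1))^r p_{i₁}⋯p_{i_l} expands as Σ over partitions j of r into at most l parts of K_j B̄_{j₁}⋯B̄_{j_l}, where B̄_j = Σ_i (i−1)^j p_i satisfies B̄₁ = 0, so only partitions with no part equal to 1 contribute, and these have at most r/2 nonzero parts. -/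
open Finset

namespace Stmt12

variable {D : ℕ}

/-- centered value -/
def c {D : ℕ} (i : Fin (D + 1)) : ℝ := (i : ℝ) - 1

/-- centered moment -/
def B (p : Fin (D + 1) → ℝ) (j : ℕ) : ℝ := ∑ i, (c i) ^ j * p i

/-- expectation of `r`-th power of centered sum over `ι`-indexed family -/
def Ew (p : Fin (D + 1) → ℝ) (ι : Type) [Fintype ι] [DecidableEq ι] (r : ℕ) : ℝ :=
  ∑ g : ι → Fin (D + 1), (∑ j, c (g j)) ^ r * ∏ j, p (g j)

lemma Ew_congr (p : Fin (D + 1) → ℝ) {ι κ : Type} [Fintype ι] [Fintype κ] [DecidableEq ι] [DecidableEq κ]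
    (e : ι ≃ κ) (r : ℕ) : Ew p ι r = Ew p κ r := by
  unfold Ew
  rw [← Equiv.sum_comp (Equiv.arrowCongr e (Equiv.refl (Fin (D + 1))))]
  refine Fintype.sum_congr _ _ fun g => ?_
  congr 1
  · congr 1
    rw [← Equiv.sum_comp e (fun j => c (Equiv.arrowCongr e (Equiv.refl (Fin (D+1))) g j))]
    exact Fintype.sum_congr _ _ fun i => by simp
  · rw [← Equiv.prod_comp e (fun j => p (Equiv.arrowCongr e (Equiv.refl (Fin (D+1))) g j))]
    exact Fintype.prod_congr _ _ fun i => by simp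

lemma Ew_fin_zero (p : Fin (D + 1) → ℝ) (r : ℕ) :
    Ew p (Fin 0) r = (0 : ℝ) ^ r := by
  simp [Ew]

lemma Ew_succ (p : Fin (D + 1) → ℝ) (l r : ℕ) :
    Ew p (Fin (l + 1)) r
      = ∑ m ∈ range (r + 1), (r.choose m : ℝ) * Ew p (Fin l) m * B p (r - m) := by
  unfold Ew
  rw [← Equiv.sum_comp (Fin.consEquiv (fun _ : Fin (l+1) => Fin (D + 1)))]
  rw [Fintype.sum_prod_type]
  have key : ∀ (a : Fin (D+1)) (g : Fin l → Fin (D+1)),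
      (∑ j, c ((Fin.consEquiv fun _ => Fin (D+1)) (a, g) j)) ^ r
          * ∏ j, p ((Fin.consEquiv fun _ => Fin (D+1)) (a, g) j)
        = ∑ m ∈ range (r + 1),
            ((∑ j, c (g j)) ^ m * (c a) ^ (r - m) * (r.choose m : ℝ)) * (p a * ∏ j, p (g j)) := by
    intro a g
    rw [Fin.sum_univ_succ, Fin.prod_univ_succ]
    simp only [Fin.cons_zero, Fin.cons_succ, Fin.consEquiv_apply]
    rw [add_comm (c a), add_pow, Finset.sum_mul]
  calc ∑ a : Fin (D+1), ∑ g : Fin l → Fin (D+1),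
        (∑ j, c ((Fin.consEquiv fun _ => Fin (D+1)) (a, g) j)) ^ r
          * ∏ j, p ((Fin.consEquiv fun _ => Fin (D+1)) (a, g) j)
      = ∑ a : Fin (D+1), ∑ g : Fin l → Fin (D+1), ∑ m ∈ range (r + 1),
          ((∑ j, c (g j)) ^ m * (c a) ^ (r - m) * (r.choose m : ℝ)) * (p a * ∏ j, p (g j)) := by
        exact Fintype.sum_congr _ _ fun a => Fintype.sum_congr _ _ fun g => key a g
    _ = ∑ a : Fin (D+1), ∑ m ∈ range (r + 1), ∑ g : Fin l → Fin (D+1),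
          ((∑ j, c (g j)) ^ m * (c a) ^ (r - m) * (r.choose m : ℝ)) * (p a * ∏ j, p (g j)) :=
        Finset.sum_congr rfl fun a _ => Finset.sum_comm
    _ = ∑ m ∈ range (r + 1), ∑ a : Fin (D+1), ∑ g : Fin l → Fin (D+1),
          ((∑ j, c (g j)) ^ m * (c a) ^ (r - m) * (r.choose m : ℝ)) * (p a * ∏ j, p (g j)) :=
        Finset.sum_comm
    _ = ∑ m ∈ range (r + 1), (r.choose m : ℝ) * Ew p (Fin l) m * B p (r - m) := by
        refine Finset.sum_congr rfl fun m _ => ?_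
        rw [Finset.sum_comm, mul_assoc, Ew, B, Finset.sum_mul_sum, Finset.mul_sum]
        refine Finset.sum_congr rfl fun g _ => ?_
        rw [Finset.mul_sum]
        exact Finset.sum_congr rfl fun a _ => by ring


section Moments
variable (p : Fin (D + 1) → ℝ)

lemma B_zero (hsum : ∑ i, p i = 1) : B p 0 = 1 := by simp [B, hsum]

lemma B_one (hsum : ∑ i, p i = 1) (hmean : ∑ i, ((i : Fin (D+1)).1 : ℝ) * p i = 1) : B p 1 = 0 := by
  have : ∀ i : Fin (D+1), c i ^ 1 * p i = (i.1 : ℝ) * p i - p i := by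
    intro i; simp [c]; ring
  rw [B]
  rw [Finset.sum_congr rfl fun i _ => this i, Finset.sum_sub_distrib, hsum, hmean]
  ring

lemma abs_c_le (i : Fin (D + 1)) : |c i| ≤ (D : ℝ) + 1 := by
  rw [abs_le, c]
  have h1 : (0:ℝ) ≤ (i.1 : ℝ) := Nat.cast_nonneg _
  have h2 : (i.1 : ℝ) ≤ D := by exact_mod_cast Nat.lt_succ_iff.mp i.isLt
  constructor <;> nlinarith

lemma abs_B_le (hp : ∀ i, 0 ≤ p i) (hsum : ∑ i, p i = 1) (j : ℕ) : |B p j| ≤ ((D : ℝ) + 1) ^ j := by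
  calc |B p j| ≤ ∑ i, |c i ^ j * p i| := Finset.abs_sum_le_sum_abs _ _
    _ ≤ ∑ i, ((D : ℝ) + 1) ^ j * p i := by
        refine Finset.sum_le_sum fun i _ => ?_
        rw [abs_mul, abs_pow, abs_of_nonneg (hp i)]
        exact mul_le_mul_of_nonneg_right (pow_le_pow_left₀ (abs_nonneg _) (abs_c_le i) j) (hp i)
    _ = ((D : ℝ) + 1) ^ j := by rw [← Finset.mul_sum, hsum, mul_one]

lemma Ew_r_zero (hsum : ∑ i, p i = 1) : ∀ l : ℕ, Ew p (Fin l) 0 = 1 := by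
  intro l
  induction l with
  | zero => simpa using Ew_fin_zero p 0
  | succ l ih => rw [Ew_succ, Finset.sum_range_one]; simp [ih, B_zero p hsum]

lemma Ew_r_one (hsum : ∑ i, p i = 1) (hmean : ∑ i, ((i : Fin (D+1)).1 : ℝ) * p i = 1) : ∀ l : ℕ, Ew p (Fin l) 1 = 0 := by
  intro l
  induction l with
  | zero => simpa using Ew_fin_zero p 1
  | succ l ih =>
      rw [Ew_succ, Finset.sum_range_succ, Finset.sum_range_one]
      simp [ih, B_zero p hsum, B_one p hsum hmean, Ew_r_zero p hsum]

/-- cumulative moment bound -/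
lemma momBound (hp : ∀ i, 0 ≤ p i) (hsum : ∑ i, p i = 1) (hmean : ∑ i, ((i : Fin (D+1)).1 : ℝ) * p i = 1) : ∀ r : ℕ, ∃ K : ℝ, 1 ≤ K ∧ ∀ m ≤ r, ∀ l : ℕ,
    |Ew p (Fin l) m| ≤ K * ((l : ℝ) + 1) ^ (m / 2) := by
  intro r
  induction r with
  | zero =>
      refine ⟨1, le_refl 1, fun m hm l => ?_⟩
      interval_cases m
      rw [Ew_r_zero p hsum]
      simp
  | succ r IH =>
      obtain ⟨K, hK1, hK⟩ := IH
      set Dr : ℝ := (D : ℝ) + 1 with hDr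
      have hDr1 : (1:ℝ) ≤ Dr := by rw [hDr]; have : (0:ℝ) ≤ (D:ℝ) := Nat.cast_nonneg _; linarith
      set M : ℝ := 2 ^ (r + 1) * Dr ^ (r + 1) * K with hM
      have h2 : (1:ℝ) ≤ 2 ^ (r+1) := one_le_pow₀ (by norm_num)
      have h3 : (1:ℝ) ≤ Dr ^ (r+1) := one_le_pow₀ hDr1
      have h23 : (1:ℝ) ≤ 2 ^ (r+1) * Dr ^ (r+1) := by nlinarith
      have hKM : K ≤ M := by rw [hM]; nlinarith
      have hM1 : (1:ℝ) ≤ M := by nlinarith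
      have hM0 : (0:ℝ) < M := lt_of_lt_of_le one_pos hM1
      set e : ℕ := (r + 1) / 2 with he
      -- increment bound
      have step : ∀ l : ℕ, |Ew p (Fin (l+1)) (r+1) - Ew p (Fin l) (r+1)|
          ≤ M * ((l : ℝ) + 1) ^ (e - 1) := by
        intro l
        have hrec := Ew_succ p l (r + 1)
        rw [Finset.sum_range_succ, Finset.sum_range_succ] at hrec
        have hb1 : B p (r + 1 - r) = 0 := by
          rw [show r + 1 - r = 1 by omega]; exact B_one p hsum hmean
        have hb0 : B p (r + 1 - (r+1)) = 1 := by
          rw [Nat.sub_self]; exact B_zero p hsum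
        rw [hb1, hb0, Nat.choose_self, mul_zero, add_zero, Nat.cast_one, one_mul,
          mul_one] at hrec
        have hdiff : Ew p (Fin (l+1)) (r+1) - Ew p (Fin l) (r+1)
            = ∑ m ∈ range r, ((r+1).choose m : ℝ) * Ew p (Fin l) m * B p (r + 1 - m) := by
          rw [hrec]; ring
        rw [hdiff]
        calc |∑ m ∈ range r, ((r+1).choose m : ℝ) * Ew p (Fin l) m * B p (r + 1 - m)|
            ≤ ∑ m ∈ range r, |((r+1).choose m : ℝ) * Ew p (Fin l) m * B p (r + 1 - m)| :=
              Finset.abs_sum_le_sum_abs _ _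
          _ ≤ ∑ m ∈ range r, ((r+1).choose m : ℝ) * (Dr ^ (r+1) * K * ((l:ℝ)+1) ^ (e - 1)) := by
              refine Finset.sum_le_sum fun m hm => ?_
              rw [Finset.mem_range] at hm
              rw [abs_mul, abs_mul]
              have h1 : |((r+1).choose m : ℝ)| = ((r+1).choose m : ℝ) := abs_of_nonneg (Nat.cast_nonneg _)
              rw [h1, mul_assoc]
              refine mul_le_mul_of_nonneg_left ?_ (Nat.cast_nonneg _)
              have hEw : |Ew p (Fin l) m| ≤ K * ((l:ℝ)+1) ^ (m / 2) := hK m (by omega) l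
              have hBb : |B p (r + 1 - m)| ≤ Dr ^ (r + 1) := by
                refine (abs_B_le p hp hsum (r+1-m)).trans ?_
                exact pow_le_pow_right₀ hDr1 (by omega)
              have hl1 : (1:ℝ) ≤ (l:ℝ) + 1 := by have : (0:ℝ) ≤ (l:ℝ) := Nat.cast_nonneg _; linarith
              have hpowle : ((l:ℝ)+1) ^ (m / 2) ≤ ((l:ℝ)+1) ^ (e - 1) :=
                pow_le_pow_right₀ hl1 (by omega)
              calc |Ew p (Fin l) m| * |B p (r + 1 - m)|
                  ≤ (K * ((l:ℝ)+1) ^ (m/2)) * Dr ^ (r+1) := by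
                    exact mul_le_mul hEw hBb (abs_nonneg _)
                      (mul_nonneg (by linarith) (by positivity))
                _ ≤ Dr ^ (r+1) * K * ((l:ℝ)+1) ^ (e-1) := by
                    have := mul_le_mul_of_nonneg_left hpowle (mul_nonneg (by linarith) (by positivity) : (0:ℝ) ≤ K * Dr ^ (r+1))
                    nlinarith [this]
          _ ≤ 2 ^ (r+1) * (Dr ^ (r+1) * K * ((l:ℝ)+1) ^ (e - 1)) := by
              rw [← Finset.sum_mul]
              refine mul_le_mul_of_nonneg_right ?_ (by positivity)
              have : ∑ m ∈ range r, (((r+1).choose m : ℕ) : ℝ)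
                  ≤ ((∑ m ∈ range (r + 2), ((r+1).choose m : ℕ) : ℕ) : ℝ) := by
                rw [Nat.cast_sum]
                exact Finset.sum_le_sum_of_subset_of_nonneg
                  (Finset.range_subset_range.mpr (by omega)) (fun _ _ _ => Nat.cast_nonneg _)
              refine this.trans ?_
              rw [Nat.sum_range_choose]
              norm_num
          _ = M * ((l:ℝ)+1) ^ (e - 1) := by rw [hM]; ring
      -- telescoped bound
      have tele : ∀ l : ℕ, |Ew p (Fin l) (r+1)| ≤ M * l * ((l:ℝ)+1) ^ (e - 1) := by
        intro l
        induction l with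
        | zero => rw [Ew_fin_zero, zero_pow (by omega)]; simp
        | succ l ih =>
            have h1 : |Ew p (Fin (l+1)) (r+1)|
                ≤ |Ew p (Fin l) (r+1)| + |Ew p (Fin (l+1)) (r+1) - Ew p (Fin l) (r+1)| := by
              have := abs_add_le (Ew p (Fin l) (r+1)) (Ew p (Fin (l+1)) (r+1) - Ew p (Fin l) (r+1))
              simpa using this
            refine h1.trans ?_
            refine (add_le_add ih (step l)).trans ?_
            have hl1 : (0:ℝ) ≤ (l:ℝ) + 1 := by positivity
            have hpow : ((l:ℝ)+1) ^ (e-1) ≤ ((l:ℝ)+1+1) ^ (e-1) :=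
              pow_le_pow_left₀ hl1 (by linarith) _
            push_cast
            nlinarith [mul_le_mul_of_nonneg_left hpow (by positivity : (0:ℝ) ≤ M * ((l:ℝ)+1))]
      refine ⟨M, hM1, fun m hm l => ?_⟩
      rcases Nat.lt_or_ge m (r+1) with h | h
      · exact (hK m (by omega) l).trans
          (mul_le_mul_of_nonneg_right hKM (by positivity))
      · have hm' : m = r + 1 := by omega
        subst hm'
        rcases Nat.eq_zero_or_pos r with hr | hr
        · subst hr
          rw [Ew_r_one p hsum hmean]
          simp only [abs_zero]
          positivity
        · have he1 : 1 ≤ e := by omega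
          refine (tele l).trans ?_
          have : M * (l:ℝ) * ((l:ℝ)+1) ^ (e-1) ≤ M * ((l:ℝ)+1) * ((l:ℝ)+1) ^ (e-1) := by
            have : (l:ℝ) ≤ (l:ℝ) + 1 := by linarith
            nlinarith [pow_nonneg (by positivity : (0:ℝ) ≤ (l:ℝ)+1) (e-1)]
          refine this.trans ?_
          rw [mul_assoc, ← pow_succ']
          rw [show e - 1 + 1 = e from by omega]

end Moments

section Split
variable (p : Fin (D + 1) → ℝ)

lemma split_sum (k l : ℕ) (r t : ℕ) :
    (∑ f : Fin k → Fin (D + 1),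
      (∑ j ∈ univ.filter (fun j : Fin k => (j : ℕ) < l), c (f j)) ^ r *
      (∑ j ∈ univ.filter (fun j : Fin k => ¬ (j : ℕ) < l), c (f j)) ^ t * ∏ j, p (f j))
    = Ew p {j : Fin k // (j : ℕ) < l} r * Ew p {j : Fin k // ¬ (j : ℕ) < l} t := by
  have hterm : ∀ f : Fin k → Fin (D + 1),
      (∑ j ∈ univ.filter (fun j : Fin k => (j : ℕ) < l), c (f j)) ^ r *
      (∑ j ∈ univ.filter (fun j : Fin k => ¬ (j : ℕ) < l), c (f j)) ^ t * ∏ j, p (f j)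
    = ((∑ j : {x : Fin k // (x : ℕ) < l}, c (f j)) ^ r
          * ∏ j : {x : Fin k // (x : ℕ) < l}, p (f j))
      * ((∑ j : {x : Fin k // ¬ (x : ℕ) < l}, c (f j)) ^ t
          * ∏ j : {x : Fin k // ¬ (x : ℕ) < l}, p (f j)) := by
    intro f
    rw [← Finset.prod_filter_mul_prod_filter_not univ (fun j : Fin k => (j : ℕ) < l)
      (fun j => p (f j))]
    rw [← Finset.sum_subtype_eq_sum_filter (fun j => c (f j)) (p := fun j : Fin k => (j:ℕ) < l),
        ← Finset.sum_subtype_eq_sum_filter (fun j => c (f j)) (p := fun j : Fin k => ¬ (j:ℕ) < l),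
        ← Finset.prod_subtype_eq_prod_filter (fun j => p (f j)) (p := fun j : Fin k => (j:ℕ) < l),
        ← Finset.prod_subtype_eq_prod_filter (fun j => p (f j)) (p := fun j : Fin k => ¬ (j:ℕ) < l)]
    rw [Finset.subtype_univ, Finset.subtype_univ]
    ring
  rw [Finset.sum_congr rfl fun f _ => hterm f]
  rw [← Equiv.sum_comp
    (Equiv.piEquivPiSubtypeProd (fun j : Fin k => (j : ℕ) < l) (fun _ => Fin (D + 1))).symm]
  rw [Fintype.sum_prod_type]
  rw [Ew, Ew, Finset.sum_mul_sum]
  refine Finset.sum_congr rfl fun g _ => Finset.sum_congr rfl fun h _ => ?_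
  have hg : ∀ j : {x : Fin k // (x : ℕ) < l},
      ((Equiv.piEquivPiSubtypeProd (fun j : Fin k => (j : ℕ) < l)
        (fun _ => Fin (D + 1))).symm (g, h)) j.1 = g j := by
    intro j
    rw [Equiv.piEquivPiSubtypeProd_symm_apply]
    simp [j.2]
  have hh : ∀ j : {x : Fin k // ¬ (x : ℕ) < l},
      ((Equiv.piEquivPiSubtypeProd (fun j : Fin k => (j : ℕ) < l)
        (fun _ => Fin (D + 1))).symm (g, h)) j.1 = h j := by
    intro j
    rw [Equiv.piEquivPiSubtypeProd_symm_apply]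
    simp [j.2]
  simp only [hg, hh]

lemma Ew_low (k l : ℕ) (hl : l ≤ k) (r : ℕ) :
    Ew p {j : Fin k // (j : ℕ) < l} r = Ew p (Fin l) r :=
  Ew_congr p
    (⟨fun j => ⟨j.1.1, j.2⟩, fun i => ⟨⟨i.1, lt_of_lt_of_le i.2 hl⟩, i.2⟩,
      fun j => rfl, fun i => rfl⟩ : {j : Fin k // (j : ℕ) < l} ≃ Fin l) r

lemma Ew_high_zero (hsum : ∑ i, p i = 1) (k l : ℕ) :
    Ew p {j : Fin k // ¬ (j : ℕ) < l} 0 = 1 := by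
  rw [Ew_congr p (Fintype.equivFin {j : Fin k // ¬ (j : ℕ) < l}) 0]
  exact Ew_r_zero p hsum _

lemma Ew_high_one (hsum : ∑ i, p i = 1)
    (hmean : ∑ i, ((i : Fin (D+1)).1 : ℝ) * p i = 1) (k l : ℕ) :
    Ew p {j : Fin k // ¬ (j : ℕ) < l} 1 = 0 := by
  rw [Ew_congr p (Fintype.equivFin {j : Fin k // ¬ (j : ℕ) < l}) 1]
  exact Ew_r_one p hsum hmean _

lemma card_filter_lt (k l : ℕ) (hl : l ≤ k) :
    (univ.filter (fun j : Fin k => (j : ℕ) < l)).card = l := by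
  rw [← Fintype.card_subtype]
  rw [Fintype.card_congr
    (⟨fun j => ⟨j.1.1, j.2⟩, fun i => ⟨⟨i.1, lt_of_lt_of_le i.2 hl⟩, i.2⟩,
      fun j => rfl, fun i => rfl⟩ : {j : Fin k // (j : ℕ) < l} ≃ Fin l)]
  exact Fintype.card_fin l

end Split
end Stmt12



open Stmt12 in
/-- for every even `r = 2s ≥ 2` there is a constant `C'_r`, independent of `k`,
with `E[(V_{m+1} − V_m)^r | V_m = l, X_m = k] ≤ C'_r l^{r/2}`. -/
theorem stmt_12 (D : ℕ) (p : Fin (D + 1) → ℝ) (hp : ∀ i, 0 ≤ p i)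
    (hsum : ∑ i, p i = 1) (hmean : ∑ i, (i.1 : ℝ) * p i = 1) :
    ∀ s : ℕ, 1 ≤ s → ∃ C : ℝ, 0 < C ∧ ∀ k l : ℕ, 0 < k → l ≤ k →
      (1 / (k : ℝ)) * (∑ f : Fin k → Fin (D + 1),
          (subOff l f - l) ^ (2 * s) * totOff f * ∏ j, p (f j)) ≤
        C * (l : ℝ) ^ s := by
  intro s hs
  obtain ⟨K, hK1, hK⟩ := momBound p hp hsum hmean (2 * s + 1)
  refine ⟨2 ^ (s + 1) * K, by positivity, fun k l hk hl => ?_⟩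
  rcases Nat.eq_zero_or_pos l with hl0 | hl0
  · subst hl0
    have hzero : ∀ f : Fin k → Fin (D + 1),
        (subOff 0 f - (0 : ℕ)) ^ (2 * s) * totOff f * ∏ j, p (f j) = 0 := by
      intro f
      have h1 : subOff (k := k) (D := D) 0 f = 0 := by
        unfold subOff
        simp
      rw [h1]
      norm_num
      left; left
      positivity
    rw [Finset.sum_congr rfl fun f _ => hzero f]
    simp only [Finset.sum_const, smul_zero, mul_zero, Nat.cast_zero]
    have hK0 : (0:ℝ) ≤ K := by linarith
    positivity
  -- l ≥ 1
  set P : Fin k → Prop := fun j => (j : ℕ) < l with hP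
  have hcard : (univ.filter (fun j : Fin k => (j : ℕ) < l)).card = l :=
    card_filter_lt k l hl
  have hS : ∀ f : Fin k → Fin (D + 1),
      subOff l f - (l : ℝ) = ∑ j ∈ univ.filter (fun j : Fin k => (j : ℕ) < l), c (f j) := by
    intro f
    unfold subOff c
    rw [Finset.sum_sub_distrib]
    rw [Finset.sum_const, hcard]
    simp
  have hT : ∀ f : Fin k → Fin (D + 1),
      totOff f = (∑ j ∈ univ.filter (fun j : Fin k => (j : ℕ) < l), c (f j))
        + (∑ j ∈ univ.filter (fun j : Fin k => ¬ (j : ℕ) < l), c (f j)) + (k : ℝ) := by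
    intro f
    unfold totOff
    rw [Finset.sum_filter_add_sum_filter_not univ (fun j : Fin k => (j : ℕ) < l)
      (fun j => c (f j))]
    unfold c
    rw [Finset.sum_sub_distrib]
    simp
  have hmain : (∑ f : Fin k → Fin (D + 1),
      (subOff l f - l) ^ (2 * s) * totOff f * ∏ j, p (f j))
      = Ew p (Fin l) (2 * s + 1) + (k : ℝ) * Ew p (Fin l) (2 * s) := by
    have hterm : ∀ f : Fin k → Fin (D + 1),
        (subOff l f - l) ^ (2 * s) * totOff f * ∏ j, p (f j)
        = ((∑ j ∈ univ.filter (fun j : Fin k => (j : ℕ) < l), c (f j)) ^ (2 * s + 1) *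
            (∑ j ∈ univ.filter (fun j : Fin k => ¬ (j : ℕ) < l), c (f j)) ^ 0 * ∏ j, p (f j))
          + ((∑ j ∈ univ.filter (fun j : Fin k => (j : ℕ) < l), c (f j)) ^ (2 * s) *
            (∑ j ∈ univ.filter (fun j : Fin k => ¬ (j : ℕ) < l), c (f j)) ^ 1 * ∏ j, p (f j))
          + (k : ℝ) * ((∑ j ∈ univ.filter (fun j : Fin k => (j : ℕ) < l), c (f j)) ^ (2 * s) *
            (∑ j ∈ univ.filter (fun j : Fin k => ¬ (j : ℕ) < l), c (f j)) ^ 0 * ∏ j, p (f j)) := by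
      intro f
      rw [hS f, hT f]
      ring
    rw [Finset.sum_congr rfl fun f _ => hterm f]
    rw [Finset.sum_add_distrib, Finset.sum_add_distrib, ← Finset.mul_sum]
    rw [split_sum p k l (2 * s + 1) 0, split_sum p k l (2 * s) 1, split_sum p k l (2 * s) 0]
    rw [Ew_low p k l hl, Ew_low p k l hl,
      Ew_high_zero p hsum k l, Ew_high_one p hsum hmean k l]
    ring
  rw [hmain]
  have hk1 : (1 : ℝ) ≤ (k : ℝ) := by exact_mod_cast hk
  have hkpos : (0 : ℝ) < (k : ℝ) := by linarith
  have hinv1 : 1 / (k : ℝ) ≤ 1 := by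
    rw [div_le_one hkpos]; exact hk1
  have hinv0 : 0 < 1 / (k : ℝ) := by positivity
  have hE1 : |Ew p (Fin l) (2 * s + 1)| ≤ K * ((l : ℝ) + 1) ^ s := by
    have := hK (2 * s + 1) (le_refl _) l
    rwa [show (2 * s + 1) / 2 = s by omega] at this
  have hE2 : |Ew p (Fin l) (2 * s)| ≤ K * ((l : ℝ) + 1) ^ s := by
    have := hK (2 * s) (by omega) l
    rwa [show (2 * s) / 2 = s by omega] at this
  have step1 : (1 / (k : ℝ)) * (Ew p (Fin l) (2 * s + 1) + (k : ℝ) * Ew p (Fin l) (2 * s))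
      ≤ |Ew p (Fin l) (2 * s + 1)| + |Ew p (Fin l) (2 * s)| := by
    rw [mul_add]
    have h1 : (1 / (k : ℝ)) * Ew p (Fin l) (2 * s + 1) ≤ |Ew p (Fin l) (2 * s + 1)| := by
      calc (1 / (k : ℝ)) * Ew p (Fin l) (2 * s + 1)
          ≤ (1 / (k : ℝ)) * |Ew p (Fin l) (2 * s + 1)| :=
            mul_le_mul_of_nonneg_left (le_abs_self _) (le_of_lt hinv0)
        _ ≤ 1 * |Ew p (Fin l) (2 * s + 1)| :=
            mul_le_mul_of_nonneg_right hinv1 (abs_nonneg _)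
        _ = _ := one_mul _
    have h2 : (1 / (k : ℝ)) * ((k : ℝ) * Ew p (Fin l) (2 * s)) ≤ |Ew p (Fin l) (2 * s)| := by
      rw [← mul_assoc, one_div_mul_cancel (ne_of_gt hkpos), one_mul]
      exact le_abs_self _
    linarith
  refine step1.trans ?_
  have hll : (1 : ℝ) ≤ (l : ℝ) := by exact_mod_cast hl0
  have hpow : ((l : ℝ) + 1) ^ s ≤ 2 ^ s * (l : ℝ) ^ s := by
    rw [← mul_pow]
    exact pow_le_pow_left₀ (by linarith) (by linarith) s
  calc |Ew p (Fin l) (2 * s + 1)| + |Ew p (Fin l) (2 * s)|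
      ≤ 2 * (K * ((l : ℝ) + 1) ^ s) := by linarith
    _ ≤ 2 * (K * (2 ^ s * (l : ℝ) ^ s)) := by
        refine mul_le_mul_of_nonneg_left ?_ (by norm_num)
        exact mul_le_mul_of_nonneg_left hpow (by linarith)
    _ = 2 ^ (s + 1) * K * (l : ℝ) ^ s := by ring
end

section
/- Quadratic covariation identity for two nested subpopulations: in the size-biased branching chain with total population k and two marked subpopulations consisting of the first l₁ and the first l₂ vertices (0 ≤ l₁ ≤ l₂ ≤ k), E[V⁽¹⁾_{m+1} V⁽²⁾_{m+1} | V⁽¹⁾_m = l₁, V⁽²⁾_m = l₂, X_m = k] = (1/k)( l₁ B₃ + (l₁(k−1) + 2 l₁(l₂−1)) B₂ + l₁(l₂−1)(k−2) ), where B_m = Σ_{i=0}^D i^m p_i. -/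
open Finset

lemma card_flt (k l : ℕ) (h : l ≤ k) :
    (univ.filter (fun j : Fin k => (j : ℕ) < l)).card = l := by
  have : (univ.filter (fun j : Fin k => (j : ℕ) < l)) =
      (Finset.range l).attachFin (fun m hm => lt_of_lt_of_le (Finset.mem_range.mp hm) h) := by
    ext j
    simp [Finset.mem_attachFin, Finset.mem_range]
  rw [this, Finset.card_attachFin, Finset.card_range]

lemma factor_sum {k D : ℕ} (p : Fin (D + 1) → ℝ) (e : Fin k → ℕ) :
    ∑ f : Fin k → Fin (D + 1), (∏ j, ((f j : ℕ) : ℝ) ^ (e j)) * ∏ j, p (f j)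
      = ∏ j, ∑ x : Fin (D + 1), ((x : ℕ) : ℝ) ^ (e j) * p x := by
  have h : ∀ f : Fin k → Fin (D + 1),
      (∏ j, ((f j : ℕ) : ℝ) ^ (e j)) * ∏ j, p (f j)
        = ∏ j, (((f j : ℕ) : ℝ) ^ (e j) * p (f j)) :=
    fun f => (Finset.prod_mul_distrib).symm
  simp_rw [h]
  rw [← Fintype.piFinset_univ]
  exact Finset.sum_prod_piFinset univ (fun (j : Fin k) (x : Fin (D + 1)) => ((x : ℕ) : ℝ) ^ (e j) * p x)

lemma triple_val {k D : ℕ} (p : Fin (D + 1) → ℝ)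
    (hsum : ∑ i, p i = 1) (hmean : ∑ i, (i.1 : ℝ) * p i = 1) (a b c : Fin k) :
    ∑ f : Fin k → Fin (D + 1),
        ((f a : ℕ) : ℝ) * ((f b : ℕ) : ℝ) * ((f c : ℕ) : ℝ) * ∏ j, p (f j)
      = 1 + ((∑ i, (i.1 : ℝ) ^ 2 * p i) - 1) *
            ((if a = b then (1:ℝ) else 0) + (if a = c then 1 else 0) +
              (if b = c then 1 else 0))
        + ((∑ i, (i.1 : ℝ) ^ 3 * p i) - 3 * (∑ i, (i.1 : ℝ) ^ 2 * p i) + 2) *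
            ((if a = b then (1:ℝ) else 0) * (if a = c then 1 else 0)) := by
  classical
  set e : Fin k → ℕ := fun j =>
    (if j = a then 1 else 0) + (if j = b then 1 else 0) + (if j = c then 1 else 0) with he
  have key : ∀ f : Fin k → Fin (D + 1),
      ((f a : ℕ) : ℝ) * ((f b : ℕ) : ℝ) * ((f c : ℕ) : ℝ) = ∏ j, ((f j : ℕ) : ℝ) ^ (e j) := by
    intro f
    simp only [he, pow_add, Finset.prod_mul_distrib]
    have h1 : ∀ d : Fin k, (∏ j, ((f j : ℕ) : ℝ) ^ (if j = d then 1 else 0)) = ((f d : ℕ) : ℝ) := by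
      intro d
      have : ∀ j : Fin k, ((f j : ℕ) : ℝ) ^ (if j = d then 1 else 0)
          = if j = d then ((f j : ℕ) : ℝ) else 1 := by
        intro j; by_cases h : j = d <;> simp [h]
      rw [Finset.prod_congr rfl (fun j _ => this j), Finset.prod_ite_eq' univ d]
      simp
    rw [h1 a, h1 b, h1 c]
  simp_rw [key]
  rw [factor_sum p e]
  by_cases hab : a = b
  · by_cases hac : a = c
    · -- a = b = c
      subst hab; subst hac
      have hpt : ∀ j : Fin k, (∑ x : Fin (D + 1), ((x : ℕ) : ℝ) ^ (e j) * p x)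
          = if j = a then (∑ i, (i.1 : ℝ) ^ 3 * p i) else 1 := by
        intro j; by_cases h : j = a <;> simp [he, h, hsum, hmean]
      rw [Finset.prod_congr rfl (fun j _ => hpt j), Finset.prod_ite_eq' univ a]
      simp only [Finset.mem_univ, if_true, if_pos rfl]
      ring
    · -- a = b ≠ c
      subst hab
      have hpt : ∀ j : Fin k, (∑ x : Fin (D + 1), ((x : ℕ) : ℝ) ^ (e j) * p x)
          = if j = a then (∑ i, (i.1 : ℝ) ^ 2 * p i) else 1 := by
        intro j
        by_cases h : j = a
        · subst h; simp [he, hac, hsum, hmean]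
        · by_cases h2 : j = c
          · subst h2; simp [he, h, hsum, hmean]
          · simp [he, h, h2, hsum, hmean]
      rw [Finset.prod_congr rfl (fun j _ => hpt j), Finset.prod_ite_eq' univ a]
      simp only [Finset.mem_univ, if_true, if_pos rfl, if_neg hac]
      ring
  · by_cases hac : a = c
    · -- a ≠ b, a = c
      subst hac
      have hba : ¬ (b = a) := fun h => hab h.symm
      have hpt : ∀ j : Fin k, (∑ x : Fin (D + 1), ((x : ℕ) : ℝ) ^ (e j) * p x)
          = if j = a then (∑ i, (i.1 : ℝ) ^ 2 * p i) else 1 := by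
        intro j
        by_cases h : j = a
        · subst h; simp [he, hab, hsum, hmean]
        · by_cases h2 : j = b
          · subst h2; simp [he, h, hsum, hmean]
          · simp [he, h, h2, hsum, hmean]
      rw [Finset.prod_congr rfl (fun j _ => hpt j), Finset.prod_ite_eq' univ a]
      simp only [Finset.mem_univ, if_true, if_pos rfl, if_neg hab, if_neg hba]
      ring
    · by_cases hbc : b = c
      · -- a ≠ b, b = c
        subst hbc
        have hpt : ∀ j : Fin k, (∑ x : Fin (D + 1), ((x : ℕ) : ℝ) ^ (e j) * p x)
            = if j = b then (∑ i, (i.1 : ℝ) ^ 2 * p i) else 1 := by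
          intro j
          by_cases h : j = b
          · subst h; simp [he, Ne.symm hab, hsum, hmean]
          · by_cases h2 : j = a
            · subst h2; simp [he, hab, hsum, hmean]
            · simp [he, h, h2, hsum, hmean]
        rw [Finset.prod_congr rfl (fun j _ => hpt j), Finset.prod_ite_eq' univ b]
        simp only [Finset.mem_univ, if_true, if_pos rfl, if_neg hab, if_neg hac]
        ring
      · -- all distinct
        have hpt : ∀ j : Fin k, (∑ x : Fin (D + 1), ((x : ℕ) : ℝ) ^ (e j) * p x) = 1 := by
          intro j
          by_cases h1 : j = a
          · subst h1; simp [he, hab, hac, hsum, hmean]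
          · by_cases h2 : j = b
            · subst h2; simp [he, h1, hbc, hsum, hmean]
            · by_cases h3 : j = c
              · subst h3; simp [he, h1, h2, hsum, hmean]
              · simp [he, h1, h2, h3, hsum, hmean]
        rw [Finset.prod_congr rfl (fun j _ => hpt j), Finset.prod_const_one]
        simp only [if_neg hab, if_neg hac, if_neg hbc]
        ring

/-- quadratic covariation identity for two nested subpopulations of sizes
`l₁ ≤ l₂ ≤ k`:
`E[V⁽¹⁾_{m+1} V⁽²⁾_{m+1} | ·] = (1/k)(l₁B₃ + (l₁(k−1) + 2l₁(l₂−1))B₂ + l₁(l₂−1)(k−2))`. -/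
theorem stmt_19 (D : ℕ) (p : Fin (D + 1) → ℝ) (hp : ∀ i, 0 ≤ p i)
    (hsum : ∑ i, p i = 1) (hmean : ∑ i, (i.1 : ℝ) * p i = 1)
    (k l₁ l₂ : ℕ) (hk : 0 < k) (h12 : l₁ ≤ l₂) (h2k : l₂ ≤ k) :
    (1 / (k : ℝ)) * (∑ f : Fin k → Fin (D + 1),
        subOff l₁ f * subOff l₂ f * totOff f * ∏ j, p (f j)) =
      (1 / (k : ℝ)) * ((l₁ : ℝ) * (∑ i, (i.1 : ℝ) ^ 3 * p i) +
        ((l₁ : ℝ) * ((k : ℝ) - 1) + 2 * (l₁ : ℝ) * ((l₂ : ℝ) - 1)) *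
          (∑ i, (i.1 : ℝ) ^ 2 * p i) +
        (l₁ : ℝ) * ((l₂ : ℝ) - 1) * ((k : ℝ) - 2)) := by
  classical
  congr 1
  set S₁ : Finset (Fin k) := univ.filter (fun j : Fin k => (j : ℕ) < l₁) with hS₁
  set S₂ : Finset (Fin k) := univ.filter (fun j : Fin k => (j : ℕ) < l₂) with hS₂
  set B2 : ℝ := ∑ i, (i.1 : ℝ) ^ 2 * p i with hB2
  set B3 : ℝ := ∑ i, (i.1 : ℝ) ^ 3 * p i with hB3
  have hcard1 : (S₁.card : ℝ) = l₁ := by rw [hS₁, card_flt k l₁ (le_trans h12 h2k)]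
  have hcard2 : (S₂.card : ℝ) = l₂ := by rw [hS₂, card_flt k l₂ h2k]
  have hsub : S₁ ⊆ S₂ := by
    intro a ha
    simp only [hS₁, hS₂, Finset.mem_filter, Finset.mem_univ, true_and] at ha ⊢
    exact lt_of_lt_of_le ha h12
  have expand : ∀ f : Fin k → Fin (D + 1),
      subOff l₁ f * subOff l₂ f * totOff f * ∏ j, p (f j)
        = ∑ a ∈ S₁, ∑ b ∈ S₂, ∑ c : Fin k,
            ((f a : ℕ) : ℝ) * ((f b : ℕ) : ℝ) * ((f c : ℕ) : ℝ) * ∏ j, p (f j) := by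
    intro f
    simp only [subOff, totOff, Finset.sum_mul, Finset.mul_sum, ← hS₁, ← hS₂]
    rw [Finset.sum_comm]
    conv_rhs => rw [Finset.sum_comm]
    exact Finset.sum_congr rfl fun b _ => Finset.sum_comm
  rw [Finset.sum_congr rfl (fun f _ => expand f)]
  rw [Finset.sum_comm]
  rw [Finset.sum_congr rfl (fun a _ => Finset.sum_comm)]
  rw [Finset.sum_congr rfl (fun a _ => Finset.sum_congr rfl (fun b _ => Finset.sum_comm))]
  rw [Finset.sum_congr rfl (fun a _ => Finset.sum_congr rfl (fun b _ =>
    Finset.sum_congr rfl (fun c _ => triple_val p hsum hmean a b c)))]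
  set C : ℝ := B3 - 3 * B2 + 2 with hC
  have hc : ∀ a b : Fin k,
      (∑ c : Fin k, (1 + (B2 - 1) * ((if a = b then (1:ℝ) else 0) + (if a = c then 1 else 0)
          + (if b = c then 1 else 0))
        + C * ((if a = b then (1:ℝ) else 0) * (if a = c then 1 else 0))))
      = (k : ℝ) + (B2 - 1) * ((k : ℝ) * (if a = b then (1:ℝ) else 0) + 2)
          + C * (if a = b then (1:ℝ) else 0) := by
    intro a b
    simp only [Finset.sum_add_distrib, ← Finset.mul_sum, Finset.sum_const, Finset.card_univ,
      Fintype.card_fin, nsmul_eq_mul, mul_one, Finset.sum_ite_eq, Finset.mem_univ, if_true]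
    ring
  rw [Finset.sum_congr rfl (fun a _ => Finset.sum_congr rfl (fun b _ => hc a b))]
  have hb : ∀ a ∈ S₁,
      (∑ b ∈ S₂, ((k : ℝ) + (B2 - 1) * ((k : ℝ) * (if a = b then (1:ℝ) else 0) + 2)
          + C * (if a = b then (1:ℝ) else 0)))
      = (l₂ : ℝ) * (k : ℝ) + (B2 - 1) * ((k : ℝ) + 2 * (l₂ : ℝ)) + C := by
    intro a ha
    have haS₂ : a ∈ S₂ := hsub ha
    simp only [Finset.sum_add_distrib, ← Finset.mul_sum, Finset.sum_const,
      nsmul_eq_mul, mul_one, Finset.sum_ite_eq, haS₂, if_true, hcard2]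
    ring
  rw [Finset.sum_congr rfl hb, Finset.sum_const, nsmul_eq_mul, hcard1]
  rw [hC]
  ring
end
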